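/- arXiv:1911.05862 — 4 statements merged into one kernel-verified Lean document; each statement's English description precedes it below -/
import Mathlib

section
/- With the diagonal action of ℤ_n × ℤ_m on ℂ^N determined by integer vectors α, β ∈ ℤ^N and F = F_{ℤ_n×ℤ_m} the associated monomial map: F satisfies the non-parallel property, i.e. if x, y ∈ ℂ^N satisfy ‖x‖ = ‖y‖ = 1 and F(x) = λ F(y) for some real λ > 0, then x ~ y. -/
namespace Stmt9Aux

/-- least positive element of a subtraction-closed set of integers divides all elements -/
lemma least_pos_dvd {P : Set ℤ} (hsub : ∀ a b, a ∈ P → b ∈ P → a - b ∈ P)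
    {ρ : ℕ} (hls : IsLeast {s : ℕ | 0 < s ∧ (s : ℤ) ∈ P} ρ) :
    ∀ z ∈ P, (ρ : ℤ) ∣ z := by
  obtain ⟨⟨hρpos, hρP⟩, hlb⟩ := hls
  have h0 : (0 : ℤ) ∈ P := by simpa using hsub _ _ hρP hρP
  have hmul : ∀ k : ℤ, k * ρ ∈ P := by
    intro k
    induction k using Int.induction_on with
    | zero => simpa using h0
    | succ n ih =>
        have e : ((n : ℤ) + 1) * ρ = (n : ℤ) * ρ - (0 - ρ) := by ring
        rw [e]; exact hsub _ _ ih (hsub _ _ h0 hρP)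
    | pred n ih =>
        have e : (-(n : ℤ) - 1) * ρ = (-(n : ℤ)) * ρ - ρ := by ring
        rw [e]; exact hsub _ _ ih hρP
  intro z hz
  have hr : z % (ρ : ℤ) ∈ P := by
    have e : z % (ρ : ℤ) = z - (z / ρ) * ρ := by rw [Int.emod_def]; ring
    rw [e]; exact hsub _ _ hz (hmul _)
  have hρ0 : (ρ : ℤ) ≠ 0 := by exact_mod_cast hρpos.ne'
  have hnonneg : 0 ≤ z % (ρ : ℤ) := Int.emod_nonneg z hρ0
  have hlt : z % (ρ : ℤ) < ρ := Int.emod_lt_of_pos z (by exact_mod_cast hρpos)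
  rcases eq_or_lt_of_le hnonneg with h | h
  · exact Int.dvd_of_emod_eq_zero h.symm
  · exfalso
    have h2 : ρ ≤ (z % (ρ : ℤ)).toNat :=
      hlb ⟨by omega, by rw [Int.toNat_of_nonneg hnonneg]; exact hr⟩
    omega

lemma exists_least_pos {P : Set ℤ} (s : ℕ) (hs : 0 < s) (hsP : (s : ℤ) ∈ P) :
    ∃ ρ : ℕ, IsLeast {t : ℕ | 0 < t ∧ (t : ℤ) ∈ P} ρ := by
  classical
  have hex : ∃ t : ℕ, 0 < t ∧ (t : ℤ) ∈ P := ⟨s, hs, hsP⟩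
  exact ⟨Nat.find hex, Nat.find_spec hex, fun t ht => Nat.find_min' hex ht⟩

/-! ### membership in span of two vectors mod Q -/

def mem2 (Q : ℕ) (u v w : ℤ × ℤ) : Prop :=
  ∃ c d z₁ z₂ : ℤ, w.1 = c * u.1 + d * v.1 + Q * z₁ ∧ w.2 = c * u.2 + d * v.2 + Q * z₂

lemma mem2_left (Q : ℕ) (u v : ℤ × ℤ) : mem2 Q u v u := ⟨1, 0, 0, 0, by ring, by ring⟩
lemma mem2_right (Q : ℕ) (u v : ℤ × ℤ) : mem2 Q u v v := ⟨0, 1, 0, 0, by ring, by ring⟩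

lemma mem2_symm {Q : ℕ} {u v w : ℤ × ℤ} (h : mem2 Q u v w) : mem2 Q v u w := by
  obtain ⟨c, d, z₁, z₂, h1, h2⟩ := h
  exact ⟨d, c, z₁, z₂, by rw [h1]; ring, by rw [h2]; ring⟩

lemma mem2_trans {Q : ℕ} {u v p r x : ℤ × ℤ} (hx : mem2 Q p r x)
    (hp : mem2 Q u v p) (hr : mem2 Q u v r) : mem2 Q u v x := by
  obtain ⟨c, d, z₁, z₂, h1, h2⟩ := hx
  obtain ⟨c1, d1, w₁, w₂, g1, g2⟩ := hp
  obtain ⟨c2, d2, y₁, y₂, f1, f2⟩ := hr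
  exact ⟨c * c1 + d * c2, c * d1 + d * d2, z₁ + c * w₁ + d * y₁, z₂ + c * w₂ + d * y₂,
    by rw [h1, g1, f1]; ring, by rw [h2, g2, f2]; ring⟩

lemma mem2_swap {Q : ℕ} {u v w : ℤ × ℤ} (h : mem2 Q u v w) :
    mem2 Q u.swap v.swap w.swap := by
  obtain ⟨c, d, z₁, z₂, h1, h2⟩ := h
  exact ⟨c, d, z₂, z₁, h2, h1⟩

lemma helper_key {q : ℕ} (hq : q.Prime) (L : ℕ) (u v w : ℤ × ℤ) (ha : ¬ (q : ℤ) ∣ u.1)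
    (hdvd : ((Int.gcd (u.1 * v.2 - u.2 * v.1) ((q : ℤ) ^ L) : ℤ)) ∣ (u.1 * w.2 - u.2 * w.1)) :
    mem2 (q ^ L) u v w := by
  set Q : ℕ := q ^ L with hQdef
  have hQcast : ((Q : ℕ) : ℤ) = (q : ℤ) ^ L := by push_cast [hQdef]; ring
  have hqZ : Prime (q : ℤ) := Int.prime_iff_natAbs_prime.mpr (by simpa using hq)
  have hcop : IsCoprime (u.1) ((Q : ℕ) : ℤ) := by
    have h1 : IsCoprime ((q : ℤ)) u.1 := (hqZ.coprime_iff_not_dvd).mpr ha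
    have h2 := h1.symm.pow_right (n := L)
    rwa [hQcast]
  obtain ⟨A, BB, hAB⟩ := hcop
  obtain ⟨p, r, hpr⟩ : ∃ p r : ℤ, u.1 * w.2 - u.2 * w.1
      = p * (u.1 * v.2 - u.2 * v.1) + r * Q := by
    obtain ⟨k, hk⟩ := hdvd
    refine ⟨k * Int.gcdA (u.1 * v.2 - u.2 * v.1) ((q : ℤ) ^ L),
            k * Int.gcdB (u.1 * v.2 - u.2 * v.1) ((q : ℤ) ^ L), ?_⟩
    have hg := Int.gcd_eq_gcd_ab (u.1 * v.2 - u.2 * v.1) ((q : ℤ) ^ L)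
    rw [hk, hg, hQcast]; ring
  set c : ℤ := A * (w.1 - p * v.1) with hc
  have hE : ((Q : ℕ) : ℤ) ∣ (w.2 - (c * u.2 + p * v.2)) := by
    have hmul : u.1 * (w.2 - (c * u.2 + p * v.2))
        = (Q : ℤ) * (r + BB * u.2 * (w.1 - p * v.1)) := by
      rw [hc]
      linear_combination hpr - (u.2 * (w.1 - p * v.1)) * hAB
    have hdd : ((Q : ℕ) : ℤ) ∣ (w.2 - (c * u.2 + p * v.2)) * u.1 :=
      ⟨(r + BB * u.2 * (w.1 - p * v.1)), by linarith [hmul]⟩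
    exact (IsCoprime.symm ⟨A, BB, hAB⟩).dvd_of_dvd_mul_right hdd
  obtain ⟨z₂, hz₂⟩ := hE
  refine ⟨c, p, BB * (w.1 - p * v.1), z₂, ?_, ?_⟩
  · rw [hc]; linear_combination -(w.1 - p * v.1) * hAB
  · linarith [hz₂]

lemma helperA {q : ℕ} (hq : q.Prime) (L : ℕ) (u v w : ℤ × ℤ) (ha : ¬ (q : ℤ) ∣ u.1) :
    mem2 (q ^ L) u v w ∨ mem2 (q ^ L) u w v := by
  have hcast : ((q : ℤ) ^ L) = ((q ^ L : ℕ) : ℤ) := by push_cast; ring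
  have hgv : ∃ i ≤ L, Int.gcd (u.1 * v.2 - u.2 * v.1) ((q : ℤ) ^ L) = q ^ i := by
    have h1 : Int.gcd (u.1 * v.2 - u.2 * v.1) ((q : ℤ) ^ L) ∣ q ^ L := by
      have := Int.gcd_dvd_right (a := u.1 * v.2 - u.2 * v.1) (b := (q : ℤ) ^ L)
      rw [hcast] at this
      exact_mod_cast this
    exact (Nat.dvd_prime_pow hq).mp h1
  have hgw : ∃ i ≤ L, Int.gcd (u.1 * w.2 - u.2 * w.1) ((q : ℤ) ^ L) = q ^ i := by
    have h1 : Int.gcd (u.1 * w.2 - u.2 * w.1) ((q : ℤ) ^ L) ∣ q ^ L := by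
      have := Int.gcd_dvd_right (a := u.1 * w.2 - u.2 * w.1) (b := (q : ℤ) ^ L)
      rw [hcast] at this
      exact_mod_cast this
    exact (Nat.dvd_prime_pow hq).mp h1
  obtain ⟨i, hi, hei⟩ := hgv
  obtain ⟨j, hj, hej⟩ := hgw
  rcases le_total i j with hij | hij
  · left
    refine helper_key hq L u v w ha ?_
    have h2 : (q : ℤ) ^ i ∣ (q : ℤ) ^ j := pow_dvd_pow _ hij
    have h3 : ((Int.gcd (u.1 * w.2 - u.2 * w.1) ((q : ℤ) ^ L) : ℤ)) ∣ (u.1 * w.2 - u.2 * w.1) :=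
      Int.gcd_dvd_left _ _
    rw [hei]; rw [hej] at h3
    exact dvd_trans (by exact_mod_cast h2) h3
  · right
    refine helper_key hq L u w v ha ?_
    have h2 : (q : ℤ) ^ j ∣ (q : ℤ) ^ i := pow_dvd_pow _ hij
    have h3 : ((Int.gcd (u.1 * v.2 - u.2 * v.1) ((q : ℤ) ^ L) : ℤ)) ∣ (u.1 * v.2 - u.2 * v.1) :=
      Int.gcd_dvd_left _ _
    rw [hej]; rw [hei] at h3
    exact dvd_trans (by exact_mod_cast h2) h3

lemma helperAny {q : ℕ} (hq : q.Prime) (L : ℕ) (u v w : ℤ × ℤ)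
    (ha : ¬ (q : ℤ) ∣ u.1 ∨ ¬ (q : ℤ) ∣ u.2) :
    mem2 (q ^ L) u v w ∨ mem2 (q ^ L) u w v := by
  rcases ha with ha | ha
  · exact helperA hq L u v w ha
  · have := helperA hq L u.swap v.swap w.swap (by simpa using ha)
    rcases this with h | h
    · left; simpa [Prod.swap_swap] using mem2_swap h
    · right; simpa [Prod.swap_swap] using mem2_swap h

lemma claim3 {q : ℕ} (hq : q.Prime) : ∀ (L : ℕ) (u v w : ℤ × ℤ),
    mem2 (q ^ L) u v w ∨ mem2 (q ^ L) u w v ∨ mem2 (q ^ L) v w u := by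
  intro L
  induction L with
  | zero =>
      intro u v w
      exact Or.inl ⟨0, 0, w.1, w.2, by push_cast; ring, by push_cast; ring⟩
  | succ L ih =>
      intro u v w
      by_cases hu : ¬ (q : ℤ) ∣ u.1 ∨ ¬ (q : ℤ) ∣ u.2
      · rcases helperAny hq (L + 1) u v w hu with h | h
        · exact Or.inl h
        · exact Or.inr (Or.inl h)
      by_cases hv : ¬ (q : ℤ) ∣ v.1 ∨ ¬ (q : ℤ) ∣ v.2
      · rcases helperAny hq (L + 1) v u w hv with h | h
        · exact Or.inl (mem2_symm h)
        · exact Or.inr (Or.inr h)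
      by_cases hw : ¬ (q : ℤ) ∣ w.1 ∨ ¬ (q : ℤ) ∣ w.2
      · rcases helperAny hq (L + 1) w u v hw with h | h
        · exact Or.inr (Or.inl (mem2_symm h))
        · exact Or.inr (Or.inr (mem2_symm h))
      push_neg at hu hv hw
      obtain ⟨⟨u1, hu1⟩, ⟨u2, hu2⟩⟩ : ((q:ℤ) ∣ u.1) ∧ ((q:ℤ) ∣ u.2) := hu
      obtain ⟨⟨v1, hv1⟩, ⟨v2, hv2⟩⟩ : ((q:ℤ) ∣ v.1) ∧ ((q:ℤ) ∣ v.2) := hv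
      obtain ⟨⟨w1, hw1⟩, ⟨w2, hw2⟩⟩ : ((q:ℤ) ∣ w.1) ∧ ((q:ℤ) ∣ w.2) := hw
      have lift : ∀ a b c : ℤ × ℤ, mem2 (q ^ L) a b c →
          mem2 (q ^ (L + 1)) ((q:ℤ) • a) ((q:ℤ) • b) ((q:ℤ) • c) := by
        rintro a b c ⟨cc, d, z₁, z₂, e1, e2⟩
        refine ⟨cc, d, z₁, z₂, ?_, ?_⟩ <;>
          simp only [Prod.smul_fst, Prod.smul_snd, smul_eq_mul] <;> push_cast
        · rw [e1]; push_cast; ring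
        · rw [e2]; push_cast; ring
      have hufst : u = (q:ℤ) • ((u1, u2) : ℤ × ℤ) := by
        ext <;> simp [hu1, hu2]
      have hvfst : v = (q:ℤ) • ((v1, v2) : ℤ × ℤ) := by
        ext <;> simp [hv1, hv2]
      have hwfst : w = (q:ℤ) • ((w1, w2) : ℤ × ℤ) := by
        ext <;> simp [hw1, hw2]
      rcases ih (u1, u2) (v1, v2) (w1, w2) with h | h | h
      · exact Or.inl (by rw [hufst, hvfst, hwfst]; exact lift _ _ _ h)
      · exact Or.inr (Or.inl (by rw [hufst, hvfst, hwfst]; exact lift _ _ _ h))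
      · exact Or.inr (Or.inr (by rw [hufst, hvfst, hwfst]; exact lift _ _ _ h))

/-- Extraction: from any list of vectors one can pick at most two spanning all of them mod q^L -/
lemma extract {q : ℕ} (hq : q.Prime) (L : ℕ) :
    ∀ l : List (ℤ × ℤ), ∃ u v : ℤ × ℤ, (u ∈ l ∨ u = 0) ∧ (v ∈ l ∨ v = 0) ∧
      ∀ w ∈ l, mem2 (q ^ L) u v w := by
  intro l
  induction l with
  | nil => exact ⟨0, 0, Or.inr rfl, Or.inr rfl, by simp⟩
  | cons a l ih =>
      obtain ⟨u, v, hu, hv, hcov⟩ := ih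
      rcases claim3 hq L u v a with h | h | h
      · refine ⟨u, v, ?_, ?_, ?_⟩
        · rcases hu with h' | h'; exacts [Or.inl (List.mem_cons_of_mem _ h'), Or.inr h']
        · rcases hv with h' | h'; exacts [Or.inl (List.mem_cons_of_mem _ h'), Or.inr h']
        · intro w hw
          rcases List.mem_cons.mp hw with rfl | hw
          · exact h
          · exact hcov w hw
      · -- mem2 u a v : keep (u, a)
        refine ⟨u, a, ?_, Or.inl List.mem_cons_self, ?_⟩
        · rcases hu with h' | h'; exacts [Or.inl (List.mem_cons_of_mem _ h'), Or.inr h']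
        · intro w hw
          rcases List.mem_cons.mp hw with rfl | hw
          · exact mem2_right _ _ _
          · exact mem2_trans (hcov w hw) (mem2_left _ _ _) h
      · -- mem2 v a u : keep (v, a)
        refine ⟨v, a, ?_, Or.inl List.mem_cons_self, ?_⟩
        · rcases hv with h' | h'; exacts [Or.inl (List.mem_cons_of_mem _ h'), Or.inr h']
        · intro w hw
          rcases List.mem_cons.mp hw with rfl | hw
          · exact mem2_right _ _ _
          · exact mem2_trans (hcov w hw) h (mem2_left _ _ _)

end Stmt9Aux

namespace Stmt9Aux

variable {N : ℕ}

def pairSet (K : ℕ) (A B : Fin N → ℤ) (j : Fin N) (u v : ℤ × ℤ) : Set ℤ :=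
  {s | ∃ c d : ℤ, (K : ℤ) ∣ s * A j + c * u.1 + d * v.1 ∧ (K : ℤ) ∣ s * B j + c * u.2 + d * v.2}

def tSet (K : ℕ) (A B : Fin N → ℤ) (j : Fin N) (T : Finset (Fin N)) : Set ℤ :=
  {s | ∃ w : Fin N → ℤ, (∀ k, w k ≠ 0 → k ∈ T) ∧
      (K : ℤ) ∣ s * A j + ∑ k ∈ T, w k * A k ∧ (K : ℤ) ∣ s * B j + ∑ k ∈ T, w k * B k}

lemma pairSet_sub (K : ℕ) (A B : Fin N → ℤ) (j : Fin N) (u v : ℤ × ℤ) :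
    ∀ a b, a ∈ pairSet K A B j u v → b ∈ pairSet K A B j u v → a - b ∈ pairSet K A B j u v := by
  rintro a b ⟨c, d, h1, h2⟩ ⟨c', d', g1, g2⟩
  refine ⟨c - c', d - d', ?_, ?_⟩
  · have := dvd_sub h1 g1; rwa [show a * A j + c * u.1 + d * v.1 - (b * A j + c' * u.1 + d' * v.1)
      = (a - b) * A j + (c - c') * u.1 + (d - d') * v.1 by ring] at this
  · have := dvd_sub h2 g2; rwa [show a * B j + c * u.2 + d * v.2 - (b * B j + c' * u.2 + d' * v.2)
      = (a - b) * B j + (c - c') * u.2 + (d - d') * v.2 by ring] at this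

lemma tSet_sub (K : ℕ) (A B : Fin N → ℤ) (j : Fin N) (T : Finset (Fin N)) :
    ∀ a b, a ∈ tSet K A B j T → b ∈ tSet K A B j T → a - b ∈ tSet K A B j T := by
  rintro a b ⟨w, hw, h1, h2⟩ ⟨w', hw', g1, g2⟩
  refine ⟨w - w', ?_, ?_, ?_⟩
  · intro k hk
    by_cases h : w k = 0
    · exact hw' k (by simpa [Pi.sub_apply, h, sub_eq_zero] using hk)
    · exact hw k h
  · have := dvd_sub h1 g1
    rwa [show a * A j + ∑ k ∈ T, w k * A k - (b * A j + ∑ k ∈ T, w' k * A k)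
      = (a - b) * A j + ∑ k ∈ T, (w - w') k * A k by
        simp only [Pi.sub_apply, sub_mul, Finset.sum_sub_distrib]; ring] at this
  · have := dvd_sub h2 g2
    rwa [show a * B j + ∑ k ∈ T, w k * B k - (b * B j + ∑ k ∈ T, w' k * B k)
      = (a - b) * B j + ∑ k ∈ T, (w - w') k * B k by
        simp only [Pi.sub_apply, sub_mul, Finset.sum_sub_distrib]; ring] at this

lemma K_mem_pairSet (K : ℕ) (A B : Fin N → ℤ) (j : Fin N) (u v : ℤ × ℤ) :
    (K : ℤ) ∈ pairSet K A B j u v :=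
  ⟨0, 0, ⟨A j, by ring⟩, ⟨B j, by ring⟩⟩

lemma K_mem_tSet (K : ℕ) (A B : Fin N → ℤ) (j : Fin N) (T : Finset (Fin N)) :
    (K : ℤ) ∈ tSet K A B j T := by
  refine ⟨0, by simp, ?_, ?_⟩ <;> simp <;> exact ⟨_, rfl⟩

lemma tSet_mono {Q K : ℕ} (hQK : (Q : ℤ) ∣ (K : ℤ)) (A B : Fin N → ℤ) (j : Fin N)
    (T : Finset (Fin N)) : tSet K A B j T ⊆ tSet Q A B j T := by
  rintro s ⟨w, hw, h1, h2⟩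
  exact ⟨w, hw, dvd_trans hQK h1, dvd_trans hQK h2⟩

lemma pairSet_scale {Q R K : ℕ} (hQR : Q * R = K) (A B : Fin N → ℤ) (j : Fin N)
    (u v : ℤ × ℤ) {s : ℤ} (hs : s ∈ pairSet Q A B j u v) :
    s * R ∈ pairSet K A B j u v := by
  obtain ⟨c, d, h1, h2⟩ := hs
  obtain ⟨x, hx⟩ := h1
  obtain ⟨y, hy⟩ := h2
  refine ⟨c * R, d * R, ⟨x, ?_⟩, ⟨y, ?_⟩⟩
  · have : (s * A j + c * u.1 + d * v.1) * R = Q * x * R := by rw [hx]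
    calc s * R * A j + c * R * u.1 + d * R * v.1 = (s * A j + c * u.1 + d * v.1) * R := by ring
      _ = (K : ℤ) * x := by rw [hx]; push_cast [← hQR]; ring
  · calc s * R * B j + c * R * u.2 + d * R * v.2 = (s * B j + c * u.2 + d * v.2) * R := by ring
      _ = (K : ℤ) * y := by rw [hy]; push_cast [← hQR]; ring

lemma pairSet_symm (K : ℕ) (A B : Fin N → ℤ) (j : Fin N) (u v : ℤ × ℤ) :
    pairSet K A B j u v = pairSet K A B j v u := by
  ext s
  constructor <;> rintro ⟨c, d, h1, h2⟩
  · exact ⟨d, c, by rwa [show s * A j + d * v.1 + c * u.1 = s * A j + c * u.1 + d * v.1 by ring],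
      by rwa [show s * B j + d * v.2 + c * u.2 = s * B j + c * u.2 + d * v.2 by ring]⟩
  · exact ⟨d, c, by rwa [show s * A j + d * u.1 + c * v.1 = s * A j + c * v.1 + d * u.1 by ring],
      by rwa [show s * B j + d * u.2 + c * v.2 = s * B j + c * v.2 + d * u.2 by ring]⟩

lemma tSet_subset_pairSet {Q : ℕ} (A B : Fin N → ℤ) (j : Fin N) (T : Finset (Fin N))
    (u v : ℤ × ℤ) (hcov : ∀ k ∈ T, mem2 Q u v (A k, B k)) :
    tSet Q A B j T ⊆ pairSet Q A B j u v := by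
  rintro s ⟨w, hw, h1, h2⟩
  have hcov' : ∀ k : Fin N, ∃ c d z₁ z₂ : ℤ, k ∈ T →
      (A k = c * u.1 + d * v.1 + Q * z₁ ∧ B k = c * u.2 + d * v.2 + Q * z₂) := by
    intro k
    by_cases hk : k ∈ T
    · obtain ⟨c, d, z₁, z₂, e1, e2⟩ := hcov k hk
      exact ⟨c, d, z₁, z₂, fun _ => ⟨e1, e2⟩⟩
    · exact ⟨0, 0, 0, 0, fun h => absurd h hk⟩
  choose cf df zf1 zf2 hcd using hcov'
  refine ⟨∑ k ∈ T, w k * cf k, ∑ k ∈ T, w k * df k, ?_, ?_⟩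
  · have hs1 : ∑ k ∈ T, w k * A k = (∑ k ∈ T, w k * cf k) * u.1 + (∑ k ∈ T, w k * df k) * v.1
        + Q * ∑ k ∈ T, w k * zf1 k := by
      rw [Finset.sum_mul, Finset.sum_mul, Finset.mul_sum, ← Finset.sum_add_distrib,
        ← Finset.sum_add_distrib]
      refine Finset.sum_congr rfl fun k hk => ?_
      rw [(hcd k hk).1]; ring
    have : s * A j + (∑ k ∈ T, w k * cf k) * u.1 + (∑ k ∈ T, w k * df k) * v.1
        = (s * A j + ∑ k ∈ T, w k * A k) - Q * ∑ k ∈ T, w k * zf1 k := by rw [hs1]; ring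
    rw [this]
    exact dvd_sub h1 (Dvd.intro _ rfl)
  · have hs2 : ∑ k ∈ T, w k * B k = (∑ k ∈ T, w k * cf k) * u.2 + (∑ k ∈ T, w k * df k) * v.2
        + Q * ∑ k ∈ T, w k * zf2 k := by
      rw [Finset.sum_mul, Finset.sum_mul, Finset.mul_sum, ← Finset.sum_add_distrib,
        ← Finset.sum_add_distrib]
      refine Finset.sum_congr rfl fun k hk => ?_
      rw [(hcd k hk).2]; ring
    have : s * B j + (∑ k ∈ T, w k * cf k) * u.2 + (∑ k ∈ T, w k * df k) * v.2
        = (s * B j + ∑ k ∈ T, w k * B k) - Q * ∑ k ∈ T, w k * zf2 k := by rw [hs2]; ring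
    rw [this]
    exact dvd_sub h2 (Dvd.intro _ rfl)

lemma sum_one_point (T : Finset (Fin N)) (i : Fin N) (hi : i ∈ T) (c : ℤ) (f : Fin N → ℤ) :
    ∑ k ∈ T, (if k = i then c else 0) * f k = c * f i := by
  rw [Finset.sum_eq_single i]
  · simp
  · intro b _ hbi; simp [hbi]
  · intro h; exact absurd hi h

lemma mod_coeff2 {M : ℕ} (hM : 0 < M) (X X' c Y Y' : ℤ)
    (h : (M : ℤ) ∣ X + c * Y) (h' : (M : ℤ) ∣ X' + c * Y') :
    ∃ u : ℕ, (M : ℤ) ∣ X + u * Y ∧ (M : ℤ) ∣ X' + u * Y' := by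
  have hM0 : (M : ℤ) ≠ 0 := by exact_mod_cast hM.ne'
  refine ⟨(c % M).toNat, ?_, ?_⟩
  · rw [Int.toNat_of_nonneg (Int.emod_nonneg c hM0), Int.emod_def]
    have : X + (c - M * (c / M)) * Y = (X + c * Y) - M * (c / M * Y) := by ring
    rw [this]
    exact dvd_sub h (Dvd.intro _ rfl)
  · rw [Int.toNat_of_nonneg (Int.emod_nonneg c hM0), Int.emod_def]
    have : X' + (c - M * (c / M)) * Y' = (X' + c * Y') - M * (c / M * Y') := by ring
    rw [this]
    exact dvd_sub h' (Dvd.intro _ rfl)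

end Stmt9Aux

namespace Stmt9Aux2
open Stmt9Aux

variable {N : ℕ}

lemma pairSet_self (K : ℕ) (A B : Fin N → ℤ) (j : Fin N) (u : ℤ × ℤ) :
    pairSet K A B j u u = pairSet K A B j u 0 := by
  ext s
  constructor <;> rintro ⟨c, d, h1, h2⟩
  · refine ⟨c + d, 0, ?_, ?_⟩
    · rw [show s * A j + (c + d) * u.1 + 0 * (0 : ℤ × ℤ).1 = s * A j + c * u.1 + d * u.1 by
        simp; ring]; exact h1
    · rw [show s * B j + (c + d) * u.2 + 0 * (0 : ℤ × ℤ).2 = s * B j + c * u.2 + d * u.2 by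
        simp; ring]; exact h2
  · refine ⟨c, 0, ?_, ?_⟩
    · rw [show s * A j + c * u.1 + 0 * u.1 = s * A j + c * u.1 + d * (0 : ℤ × ℤ).1 by simp]
      exact h1
    · rw [show s * B j + c * u.2 + 0 * u.2 = s * B j + c * u.2 + d * (0 : ℤ × ℤ).2 by simp]
      exact h2

lemma pkg_zero (M : ℕ) (hM : 0 < M) (A B t : Fin N → ℤ) (j : Fin N) (T : Finset (Fin N))
    (Hsing : ∃ e : ℕ, IsLeast {s : ℕ | 0 < s ∧ (M:ℤ) ∣ s * A j ∧ (M:ℤ) ∣ s * B j} e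
      ∧ (M:ℤ) ∣ e * t j) :
    ∃ ρ : ℕ, IsLeast {s : ℕ | 0 < s ∧ (s:ℤ) ∈ pairSet M A B j 0 0} ρ ∧
      ∃ w : Fin N → ℤ, (∀ k, w k ≠ 0 → k ∈ T) ∧
        (M:ℤ) ∣ ρ * A j + ∑ k ∈ T, w k * A k ∧ (M:ℤ) ∣ ρ * B j + ∑ k ∈ T, w k * B k ∧
        (M:ℤ) ∣ ρ * t j + ∑ k ∈ T, w k * t k := by
  obtain ⟨e, ⟨⟨hepos, heA, heB⟩, hemin⟩, heval⟩ := Hsing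
  have hset : {s : ℕ | 0 < s ∧ (s:ℤ) ∈ pairSet M A B j 0 0}
      = {s : ℕ | 0 < s ∧ (M:ℤ) ∣ s * A j ∧ (M:ℤ) ∣ s * B j} := by
    ext s
    simp only [Set.mem_setOf_eq, pairSet, and_congr_right_iff]
    intro _
    constructor
    · rintro ⟨c, d, h1, h2⟩
      constructor
      · simpa using h1
      · simpa using h2
    · rintro ⟨h1, h2⟩
      exact ⟨0, 0, by simpa using h1, by simpa using h2⟩
  rw [hset]
  exact ⟨e, ⟨⟨hepos, heA, heB⟩, hemin⟩, 0, by simp, by simpa using heA, by simpa using heB,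
    by simpa using heval⟩

lemma pkg_single (M : ℕ) (hM : 0 < M) (A B t : Fin N → ℤ) (j : Fin N) (T : Finset (Fin N))
    (i : Fin N) (hi : i ∈ T)
    (Hpair : ∃ a b : ℕ, (M:ℤ) ∣ a * A j + b * A i ∧ (M:ℤ) ∣ a * B j + b * B i ∧ 0 < a ∧
        (∀ s u' : ℕ, 0 < s → (M:ℤ) ∣ s * A j + u' * A i → (M:ℤ) ∣ s * B j + u' * B i → a ≤ s) ∧
        (M:ℤ) ∣ a * t j + b * t i) :
    ∃ ρ : ℕ, IsLeast {s : ℕ | 0 < s ∧ (s:ℤ) ∈ pairSet M A B j (A i, B i) 0} ρ ∧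
      ∃ w : Fin N → ℤ, (∀ k, w k ≠ 0 → k ∈ T) ∧
        (M:ℤ) ∣ ρ * A j + ∑ k ∈ T, w k * A k ∧ (M:ℤ) ∣ ρ * B j + ∑ k ∈ T, w k * B k ∧
        (M:ℤ) ∣ ρ * t j + ∑ k ∈ T, w k * t k := by
  obtain ⟨a, b, hA, hB, hapos, hmin, hval⟩ := Hpair
  refine ⟨a, ⟨⟨hapos, ⟨(b : ℤ), 0, ?_, ?_⟩⟩, ?_⟩, ?_⟩
  · rw [show (a : ℤ) * A j + (b : ℤ) * (A i, B i).1 + 0 * (0 : ℤ × ℤ).1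
      = (a : ℤ) * A j + (b : ℤ) * A i by simp]; exact hA
  · rw [show (a : ℤ) * B j + (b : ℤ) * (A i, B i).2 + 0 * (0 : ℤ × ℤ).2
      = (a : ℤ) * B j + (b : ℤ) * B i by simp]; exact hB
  · rintro s ⟨hspos, c, d, h1, h2⟩
    simp only [Prod.fst_zero, Prod.snd_zero, mul_zero, add_zero] at h1 h2
    obtain ⟨u', hu1, hu2⟩ := mod_coeff2 hM _ _ c _ _ h1 h2
    exact hmin s u' hspos hu1 hu2
  · refine ⟨fun k => if k = i then (b : ℤ) else 0, ?_, ?_, ?_, ?_⟩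
    · intro k hk
      by_cases h : k = i
      · subst h; exact hi
      · simp [h] at hk
    · rw [sum_one_point T i hi]; exact hA
    · rw [sum_one_point T i hi]; exact hB
    · rw [sum_one_point T i hi]; exact hval

lemma pkg_pair (M : ℕ) (hM : 0 < M) (A B t : Fin N → ℤ) (j : Fin N) (T : Finset (Fin N))
    (i l : Fin N) (hi : i ∈ T) (hl : l ∈ T) (hil : i ≠ l)
    (Htrip : ∃ c d e : ℕ,
        (M:ℤ) ∣ c * A j + d * A i + e * A l ∧ (M:ℤ) ∣ c * B j + d * B i + e * B l ∧ 0 < c ∧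
        (∀ s u' v' : ℕ, 0 < s → (M:ℤ) ∣ s * A j + u' * A i + v' * A l →
          (M:ℤ) ∣ s * B j + u' * B i + v' * B l → c ≤ s) ∧
        (M:ℤ) ∣ c * t j + d * t i + e * t l) :
    ∃ ρ : ℕ, IsLeast {s : ℕ | 0 < s ∧ (s:ℤ) ∈ pairSet M A B j (A i, B i) (A l, B l)} ρ ∧
      ∃ w : Fin N → ℤ, (∀ k, w k ≠ 0 → k ∈ T) ∧
        (M:ℤ) ∣ ρ * A j + ∑ k ∈ T, w k * A k ∧ (M:ℤ) ∣ ρ * B j + ∑ k ∈ T, w k * B k ∧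
        (M:ℤ) ∣ ρ * t j + ∑ k ∈ T, w k * t k := by
  obtain ⟨c, d, e, hA, hB, hcpos, hmin, hval⟩ := Htrip
  have hsum : ∀ f : Fin N → ℤ, ∑ k ∈ T, ((if k = i then (d:ℤ) else 0) + (if k = l then (e:ℤ) else 0)) * f k
      = d * f i + e * f l := by
    intro f
    have : ∀ k ∈ T, ((if k = i then (d:ℤ) else 0) + (if k = l then (e:ℤ) else 0)) * f k
        = (if k = i then (d:ℤ) else 0) * f k + (if k = l then (e:ℤ) else 0) * f k := by
      intro k _; ring
    rw [Finset.sum_congr rfl this, Finset.sum_add_distrib, sum_one_point T i hi,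
      sum_one_point T l hl]
  refine ⟨c, ⟨⟨hcpos, ⟨(d : ℤ), (e : ℤ), by simpa using hA, by simpa using hB⟩⟩, ?_⟩, ?_⟩
  · rintro s ⟨hspos, cc, dd, h1, h2⟩
    simp only at h1 h2
    obtain ⟨u', hu1, hu2⟩ := mod_coeff2 hM (s * A j + dd * A l) (s * B j + dd * B l) cc (A i) (B i)
      (by rw [show s * A j + dd * A l + cc * A i = s * A j + cc * A i + dd * A l by ring]; exact h1)
      (by rw [show s * B j + dd * B l + cc * B i = s * B j + cc * B i + dd * B l by ring]; exact h2)
    obtain ⟨v', hv1, hv2⟩ := mod_coeff2 hM (s * A j + u' * A i) (s * B j + u' * B i) dd (A l) (B l)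
      (by rw [show s * A j + (u':ℤ) * A i + dd * A l = s * A j + dd * A l + u' * A i by ring]; exact hu1)
      (by rw [show s * B j + (u':ℤ) * B i + dd * B l = s * B j + dd * B l + u' * B i by ring]; exact hu2)
    exact hmin s u' v' hspos hv1 hv2
  · refine ⟨fun k => (if k = i then (d:ℤ) else 0) + (if k = l then (e:ℤ) else 0), ?_, ?_, ?_, ?_⟩
    · intro k hk
      by_cases h : k = i
      · subst h; exact hi
      · by_cases h' : k = l
        · subst h'; exact hl
        · simp [h, h'] at hk
    · rw [hsum A, ← add_assoc]; exact hA
    · rw [hsum B, ← add_assoc]; exact hB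
    · rw [hsum t, ← add_assoc]; exact hval

end Stmt9Aux2

namespace Stmt9Aux2
open Stmt9Aux

lemma pkg (M : ℕ) (hM : 0 < M) (A B t : Fin N → ℤ) (j : Fin N) (T : Finset (Fin N))
    (u v : ℤ × ℤ)
    (hu : (∃ i ∈ T, u = (A i, B i)) ∨ u = 0) (hv : (∃ i ∈ T, v = (A i, B i)) ∨ v = 0)
    (Hsing : ∃ e : ℕ, IsLeast {s : ℕ | 0 < s ∧ (M:ℤ) ∣ s * A j ∧ (M:ℤ) ∣ s * B j} e
      ∧ (M:ℤ) ∣ e * t j)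
    (Hpair : ∀ i ∈ T, ∃ a b : ℕ, (M:ℤ) ∣ a * A j + b * A i ∧ (M:ℤ) ∣ a * B j + b * B i ∧ 0 < a ∧
        (∀ s u' : ℕ, 0 < s → (M:ℤ) ∣ s * A j + u' * A i → (M:ℤ) ∣ s * B j + u' * B i → a ≤ s) ∧
        (M:ℤ) ∣ a * t j + b * t i)
    (Htrip : ∀ i l, i ∈ T → l ∈ T → i < l → ∃ c d e : ℕ,
        (M:ℤ) ∣ c * A j + d * A i + e * A l ∧ (M:ℤ) ∣ c * B j + d * B i + e * B l ∧ 0 < c ∧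
        (∀ s u' v' : ℕ, 0 < s → (M:ℤ) ∣ s * A j + u' * A i + v' * A l →
          (M:ℤ) ∣ s * B j + u' * B i + v' * B l → c ≤ s) ∧
        (M:ℤ) ∣ c * t j + d * t i + e * t l) :
    ∃ ρ : ℕ, IsLeast {s : ℕ | 0 < s ∧ (s:ℤ) ∈ pairSet M A B j u v} ρ ∧
      ∃ w : Fin N → ℤ, (∀ k, w k ≠ 0 → k ∈ T) ∧
        (M:ℤ) ∣ ρ * A j + ∑ k ∈ T, w k * A k ∧ (M:ℤ) ∣ ρ * B j + ∑ k ∈ T, w k * B k ∧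
        (M:ℤ) ∣ ρ * t j + ∑ k ∈ T, w k * t k := by
  rcases hu with ⟨i, hi, rfl⟩ | rfl
  · rcases hv with ⟨l, hl, rfl⟩ | rfl
    · rcases lt_trichotomy i l with hil | hil | hil
      · exact pkg_pair M hM A B t j T i l hi hl hil.ne (Htrip i l hi hl hil)
      · subst hil
        rw [pairSet_self]
        exact pkg_single M hM A B t j T i hi (Hpair i hi)
      · rw [pairSet_symm]
        exact pkg_pair M hM A B t j T l i hl hi hil.ne (Htrip l i hl hi hil)
    · exact pkg_single M hM A B t j T i hi (Hpair i hi)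
  · rcases hv with ⟨l, hl, rfl⟩ | rfl
    · rw [pairSet_symm]
      exact pkg_single M hM A B t j T l hl (Hpair l hl)
    · exact pkg_zero M hM A B t j T Hsing

lemma finset_gcd_bezout (s : Finset ℕ) (f : ℕ → ℕ) :
    ∃ lam : ℕ → ℤ, ((s.gcd f : ℕ) : ℤ) = ∑ q ∈ s, lam q * f q := by
  classical
  induction s using Finset.induction_on with
  | empty => exact ⟨0, by simp⟩
  | @insert a s' ha ih =>
      obtain ⟨lam, hlam⟩ := ih
      refine ⟨fun q => if q = a then Nat.gcdA (f a) (s'.gcd f)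
        else Nat.gcdB (f a) (s'.gcd f) * lam q, ?_⟩
      rw [Finset.gcd_insert, Finset.sum_insert ha]
      have hg := Nat.gcd_eq_gcd_ab (f a) (s'.gcd f)
      have : ∑ q ∈ s', (if q = a then Nat.gcdA (f a) (s'.gcd f)
          else Nat.gcdB (f a) (s'.gcd f) * lam q) * (f q : ℤ)
          = Nat.gcdB (f a) (s'.gcd f) * ∑ q ∈ s', lam q * f q := by
        rw [Finset.mul_sum]
        refine Finset.sum_congr rfl fun q hq => ?_
        have : q ≠ a := fun h => ha (h ▸ hq)
        simp [this]; ring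
      rw [this, ← hlam]
      simp only [if_pos, if_true, eq_self_iff_true]
      rw [show (gcd (f a) (Finset.gcd s' f)) = Nat.gcd (f a) (Finset.gcd s' f) from rfl, hg]
      ring

end Stmt9Aux2

namespace Stmt9Aux2
open Stmt9Aux

lemma closure (M : ℕ) (hM : 0 < M) {N : ℕ} (A B t : Fin N → ℤ) (S : Finset (Fin N))
    (H1 : ∀ k ∈ S, ∃ e : ℕ,
      IsLeast {s : ℕ | 0 < s ∧ (M:ℤ) ∣ s * A k ∧ (M:ℤ) ∣ s * B k} e ∧ (M:ℤ) ∣ e * t k)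
    (H2 : ∀ k₁ k₂, k₁ ∈ S → k₂ ∈ S → k₁ < k₂ → ∃ a b : ℕ,
      (M:ℤ) ∣ a * A k₁ + b * A k₂ ∧ (M:ℤ) ∣ a * B k₁ + b * B k₂ ∧ 0 < a ∧
      (∀ s u : ℕ, 0 < s → (M:ℤ) ∣ s * A k₁ + u * A k₂ → (M:ℤ) ∣ s * B k₁ + u * B k₂ → a ≤ s) ∧
      (M:ℤ) ∣ a * t k₁ + b * t k₂)
    (H3 : ∀ k₁ k₂ k₃, k₁ ∈ S → k₂ ∈ S → k₃ ∈ S → k₁ < k₂ → k₂ < k₃ → ∃ c d e : ℕ,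
      (M:ℤ) ∣ c * A k₁ + d * A k₂ + e * A k₃ ∧ (M:ℤ) ∣ c * B k₁ + d * B k₂ + e * B k₃ ∧ 0 < c ∧
      (∀ s u v : ℕ, 0 < s → (M:ℤ) ∣ s * A k₁ + u * A k₂ + v * A k₃ →
        (M:ℤ) ∣ s * B k₁ + u * B k₂ + v * B k₃ → c ≤ s) ∧
      (M:ℤ) ∣ c * t k₁ + d * t k₂ + e * t k₃) :
    ∀ c : Fin N → ℤ, (∀ k, c k ≠ 0 → k ∈ S) → ((M:ℤ) ∣ ∑ k, c k * A k) →
      ((M:ℤ) ∣ ∑ k, c k * B k) → (M:ℤ) ∣ ∑ k, c k * t k := by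
  classical
  rcases Nat.lt_or_ge M 2 with hM1 | hM2
  · have hM1' : M = 1 := by omega
    intro c _ _ _
    rw [hM1']
    exact one_dvd _
  suffices H : ∀ d : ℕ, ∀ c : Fin N → ℤ, (∀ k, c k ≠ 0 → k ∈ S) →
      (∀ k, c k ≠ 0 → N - d ≤ (k:ℕ)) → ((M:ℤ) ∣ ∑ k, c k * A k) →
      ((M:ℤ) ∣ ∑ k, c k * B k) → (M:ℤ) ∣ ∑ k, c k * t k by
    intro c h1 h2 h3
    exact H N c h1 (fun k _ => by omega) h2 h3
  intro d
  induction d with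
  | zero =>
      intro c hS hpos hA hB
      have hz : ∀ k ∈ Finset.univ, c k * t k = (0:ℤ) := by
        intro k _
        by_cases h : c k = 0
        · simp [h]
        · have := hpos k h
          have := k.isLt
          omega
      rw [Finset.sum_eq_zero hz]
      exact dvd_zero _
  | succ d ih =>
      intro c hS hpos hA hB
      by_cases hall : ∀ k, c k ≠ 0 → N - d ≤ (k:ℕ)
      · exact ih c hS hall hA hB
      push_neg at hall
      obtain ⟨j, hcj, hjlt⟩ := hall
      have hjval : (j:ℕ) = N - (d+1) := by have := hpos j hcj; omega
      have hdN : d < N := by have := j.isLt; omega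
      have hjS : j ∈ S := hS j hcj
      set T : Finset (Fin N) := S.filter (fun k => j < k) with hT
      have hjT : j ∉ T := by simp [hT]
      have hTj : ∀ k ∈ T, j < k := fun k hk => (Finset.mem_filter.mp hk).2
      have hTS : T ⊆ S := Finset.filter_subset _ _
      have hsupT : ∀ k, c k ≠ 0 → k ≠ j → k ∈ T := by
        intro k hk hkj
        refine Finset.mem_filter.mpr ⟨hS k hk, ?_⟩
        have h1 := hpos k hk
        have h2 : (k:ℕ) ≠ (j:ℕ) := fun h => hkj (Fin.ext h)
        rw [Fin.lt_def]
        omega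
      set w0 : Fin N → ℤ := fun k => if k = j then 0 else c k with hw0
      have hw0supp : ∀ k, w0 k ≠ 0 → k ∈ T := by
        intro k hk
        by_cases h : k = j
        · simp [hw0, h] at hk
        · simp only [hw0, if_neg h] at hk
          exact hsupT k hk h
      have huniv0 : ∀ f : Fin N → ℤ, ∑ k, w0 k * f k = (∑ k, c k * f k) - c j * f j := by
        intro f
        have h1 : ∑ k, c k * f k = c j * f j + ∑ k ∈ Finset.univ.erase j, c k * f k :=
          (Finset.add_sum_erase _ _ (Finset.mem_univ j)).symm
        have h2 : ∑ k, w0 k * f k = ∑ k ∈ Finset.univ.erase j, w0 k * f k := by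
          symm
          apply Finset.sum_subset (Finset.erase_subset _ _)
          intro k _ hk
          simp at hk
          simp [hw0, hk]
        have h3 : ∑ k ∈ Finset.univ.erase j, w0 k * f k = ∑ k ∈ Finset.univ.erase j, c k * f k := by
          refine Finset.sum_congr rfl fun k hk => ?_
          have : k ≠ j := (Finset.mem_erase.mp hk).1
          simp [hw0, this]
        rw [h2, h3, h1]; ring
      have hTrestrict : ∀ f : Fin N → ℤ, ∑ k ∈ T, w0 k * f k = ∑ k, w0 k * f k := by
        intro f
        apply Finset.sum_subset (Finset.subset_univ T)
        intro k _ hk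
        by_cases h : w0 k = 0
        · simp [h]
        · exact absurd (hw0supp k h) hk
      have hcjT : (c j) ∈ tSet M A B j T := by
        refine ⟨w0, hw0supp, ?_, ?_⟩
        · rw [hTrestrict A, huniv0 A,
            show c j * A j + ((∑ k, c k * A k) - c j * A j) = ∑ k, c k * A k by ring]
          exact hA
        · rw [hTrestrict B, huniv0 B,
            show c j * B j + ((∑ k, c k * B k) - c j * B j) = ∑ k, c k * B k by ring]
          exact hB
      obtain ⟨r, hr⟩ := exists_least_pos (P := tSet M A B j T) M hM (K_mem_tSet M A B j T)
      have hrpos : 0 < r := hr.1.1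
      have hrdvd_cj : (r:ℤ) ∣ c j := least_pos_dvd (tSet_sub M A B j T) hr _ hcjT
      -- per prime packages
      have hpkg : ∀ q : ℕ, ∃ ρ : ℕ, ∃ w : Fin N → ℤ, q ∈ M.primeFactors →
          (0 < ρ ∧ ρ ∣ M ∧ (∀ k, w k ≠ 0 → k ∈ T) ∧
           ((M:ℤ) ∣ ρ * A j + ∑ k ∈ T, w k * A k) ∧ ((M:ℤ) ∣ ρ * B j + ∑ k ∈ T, w k * B k) ∧
           ((M:ℤ) ∣ ρ * t j + ∑ k ∈ T, w k * t k) ∧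
           ρ.factorization q ≤ r.factorization q) := by
        intro q
        by_cases hq : q ∈ M.primeFactors
        swap
        · exact ⟨1, 0, fun h => absurd h hq⟩
        have hqp : q.Prime := Nat.prime_of_mem_primeFactors hq
        set L := M.factorization q with hL
        have hQdvdM : q ^ L ∣ M := Nat.ordProj_dvd M q
        have hQpos : 0 < q ^ L := pow_pos hqp.pos L
        have hQcompl : q ^ L * (M / q ^ L) = M := Nat.ordProj_mul_ordCompl_eq_self M q
        obtain ⟨u, v, hu, hv, hcov⟩ := extract hqp L ((T.toList).map (fun k => (A k, B k)))
        have hform : ∀ z : ℤ × ℤ, (z ∈ (T.toList).map (fun k => (A k, B k)) ∨ z = 0) →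
            ((∃ i ∈ T, z = (A i, B i)) ∨ z = 0) := by
          rintro z (hz | rfl)
          · obtain ⟨i, hi, rfl⟩ := List.mem_map.mp hz
            exact Or.inl ⟨i, Finset.mem_toList.mp hi, rfl⟩
          · exact Or.inr rfl
        have hcov' : ∀ k ∈ T, mem2 (q ^ L) u v (A k, B k) := fun k hk =>
          hcov _ (List.mem_map_of_mem (Finset.mem_toList.mpr hk))
        obtain ⟨ρ, hρleast, w, hwsupp, hwA, hwB, hwt⟩ :=
          pkg M hM A B t j T u v (hform u hu) (hform v hv)
            (H1 j hjS) (fun i hi => H2 j i hjS (hTS hi) (hTj i hi))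
            (fun i l hi hl hil => H3 j i l hjS (hTS hi) (hTS hl) (hTj i hi) hil)
        have hρM : ρ ∣ M := by
          have := least_pos_dvd (pairSet_sub M A B j u v) hρleast _ (K_mem_pairSet M A B j u v)
          exact_mod_cast this
        have hfact : ρ.factorization q ≤ r.factorization q := by
          obtain ⟨σ, hσ⟩ := exists_least_pos (P := tSet (q ^ L) A B j T) (q ^ L) hQpos
            (K_mem_tSet (q ^ L) A B j T)
          have hσr : σ ∣ r := by
            have h1 : ((r:ℕ):ℤ) ∈ tSet (q ^ L) A B j T :=
              tSet_mono (by exact_mod_cast hQdvdM) A B j T hr.1.2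
            have := least_pos_dvd (tSet_sub (q ^ L) A B j T) hσ _ h1
            exact_mod_cast this
          have hσQ : σ ∣ q ^ L := by
            have := least_pos_dvd (tSet_sub (q ^ L) A B j T) hσ _ (K_mem_tSet (q ^ L) A B j T)
            exact_mod_cast this
          obtain ⟨cq, hcqL, hcqe⟩ := (Nat.dvd_prime_pow hqp).mp hσQ
          have hρσ : ρ ∣ σ * (M / q ^ L) := by
            have h1 : ((σ:ℕ):ℤ) ∈ pairSet (q ^ L) A B j u v :=
              tSet_subset_pairSet A B j T u v hcov' hσ.1.2
            have h2 : ((σ:ℤ) * ((M / q ^ L : ℕ) : ℤ)) ∈ pairSet M A B j u v :=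
              pairSet_scale hQcompl A B j u v h1
            have := least_pos_dvd (pairSet_sub M A B j u v) hρleast _ h2
            exact_mod_cast this
          have h3 : q ^ (ρ.factorization q) ∣ σ * (M / q ^ L) :=
            dvd_trans (Nat.ordProj_dvd ρ q) hρσ
          have hcop : (q ^ (ρ.factorization q)).Coprime (M / q ^ L) :=
            Nat.Coprime.pow_left _ ((Nat.Prime.coprime_iff_not_dvd hqp).mpr
              (Nat.not_dvd_ordCompl hqp hM.ne'))
          have h4 : q ^ (ρ.factorization q) ∣ σ := hcop.dvd_of_dvd_mul_right h3
          rw [hcqe] at h4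
          have h5 : ρ.factorization q ≤ cq := (Nat.pow_dvd_pow_iff_le_right hqp.one_lt).mp h4
          have h6 : cq ≤ r.factorization q :=
            (Nat.Prime.pow_dvd_iff_le_factorization hqp hrpos.ne').mp (hcqe ▸ hσr)
          omega
        exact ⟨ρ, w, fun _ => ⟨hρleast.1.1, hρM, hwsupp, hwA, hwB, hwt, hfact⟩⟩
      choose ρf wf hpf using hpkg
      have hpfne : M.primeFactors.Nonempty := by
        rw [Nat.nonempty_primeFactors]; omega
      obtain ⟨q0, hq0⟩ := hpfne
      set D := M.primeFactors.gcd ρf with hD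
      have hD0 : D ≠ 0 := by
        intro h
        have h1 := Finset.gcd_eq_zero_iff.mp h q0 hq0
        have h2 := (hpf q0 hq0).1
        omega
      have hDr : D ∣ r := by
        refine (Nat.factorization_le_iff_dvd hD0 hrpos.ne').mp ?_
        rw [Finsupp.le_def]
        intro p
        by_cases hp : p ∈ M.primeFactors
        · have h1 : D ∣ ρf p := Finset.gcd_dvd hp
          have hρ0 : ρf p ≠ 0 := (hpf p hp).1.ne'
          have h2 := (Nat.factorization_le_iff_dvd hD0 hρ0).mpr h1
          exact le_trans (Finsupp.le_def.mp h2 p) (hpf p hp).2.2.2.2.2.2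
        · have hDM : D ∣ M := dvd_trans (Finset.gcd_dvd hq0) (hpf q0 hq0).2.1
          have h2 := (Nat.factorization_le_iff_dvd hD0 hM.ne').mpr hDM
          have h3 : M.factorization p = 0 := by
            rw [← Nat.support_factorization] at hp
            exact Finsupp.notMem_support_iff.mp hp
          have := Finsupp.le_def.mp h2 p
          omega
      obtain ⟨lam, hlam⟩ := finset_gcd_bezout M.primeFactors ρf
      have hDcj : (D:ℤ) ∣ c j := dvd_trans (Int.natCast_dvd_natCast.mpr hDr) hrdvd_cj
      set e0 : ℤ := c j / D with he0def
      have he0 : (D:ℤ) * e0 = c j := Int.mul_ediv_cancel' hDcj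
      set c' : Fin N → ℤ := fun k => w0 k - ∑ q ∈ M.primeFactors, (e0 * lam q) * wf q k with hc'
      have hc'supp : ∀ k, c' k ≠ 0 → k ∈ T := by
        intro k hk
        by_contra hkT
        apply hk
        have h1 : w0 k = 0 := by
          by_contra h
          exact hkT (hw0supp k h)
        have h2 : ∀ q ∈ M.primeFactors, (e0 * lam q) * wf q k = 0 := by
          intro q hq
          have : wf q k = 0 := by
            by_contra h
            exact hkT ((hpf q hq).2.2.1 k h)
          simp [this]
        simp [hc', h1, Finset.sum_eq_zero h2]
      have key : ∀ f : Fin N → ℤ, (∀ q ∈ M.primeFactors,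
          (M:ℤ) ∣ ρf q * f j + ∑ k ∈ T, wf q k * f k) →
          (M:ℤ) ∣ (∑ k, c k * f k) - (∑ k, c' k * f k) := by
        intro f hf
        have e1 : ∑ k, c' k * f k = (∑ k, w0 k * f k)
            - ∑ q ∈ M.primeFactors, e0 * lam q * (∑ k, wf q k * f k) := by
          simp only [hc', sub_mul, Finset.sum_sub_distrib, Finset.sum_mul]
          congr 1
          rw [Finset.sum_comm]
          refine Finset.sum_congr rfl fun q _ => ?_
          rw [Finset.mul_sum]
          exact Finset.sum_congr rfl fun k _ => by ring
        have e2 : ∀ q ∈ M.primeFactors, ∑ k, wf q k * f k = ∑ k ∈ T, wf q k * f k := by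
          intro q hq
          symm
          apply Finset.sum_subset (Finset.subset_univ T)
          intro k _ hk
          have : wf q k = 0 := by
            by_contra h
            exact hk ((hpf q hq).2.2.1 k h)
          simp [this]
        have e2' : ∑ q ∈ M.primeFactors, e0 * lam q * (∑ k, wf q k * f k)
            = ∑ q ∈ M.primeFactors, e0 * lam q * (∑ k ∈ T, wf q k * f k) :=
          Finset.sum_congr rfl fun q hq => by rw [e2 q hq]
        have hfirst : (∑ q ∈ M.primeFactors, e0 * lam q * ((ρf q : ℤ) * f j)) = c j * f j := by
          have hc : ∀ q ∈ M.primeFactors, e0 * lam q * ((ρf q : ℤ) * f j)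
              = (lam q * (ρf q : ℤ)) * (e0 * f j) := fun q _ => by ring
          rw [Finset.sum_congr rfl hc, ← Finset.sum_mul, ← hlam,
            show (D:ℤ) * (e0 * f j) = ((D:ℤ) * e0) * f j by ring, he0]
        have hsplit : ∑ q ∈ M.primeFactors, e0 * lam q * ((ρf q : ℤ) * f j + ∑ k ∈ T, wf q k * f k)
            = (∑ q ∈ M.primeFactors, e0 * lam q * ((ρf q : ℤ) * f j))
              + ∑ q ∈ M.primeFactors, e0 * lam q * (∑ k ∈ T, wf q k * f k) := by
          rw [← Finset.sum_add_distrib]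
          exact Finset.sum_congr rfl fun q _ => by ring
        have egoal : (∑ k, c k * f k) - (∑ k, c' k * f k)
            = ∑ q ∈ M.primeFactors, e0 * lam q * ((ρf q : ℤ) * f j + ∑ k ∈ T, wf q k * f k) := by
          rw [e1, e2', huniv0 f, hsplit, hfirst]
          ring
        rw [egoal]
        exact Finset.dvd_sum fun q hq => Dvd.dvd.mul_left (hf q hq) _
      have hkeyA := key A (fun q hq => (hpf q hq).2.2.2.1)
      have hkeyB := key B (fun q hq => (hpf q hq).2.2.2.2.1)
      have hkeyt := key t (fun q hq => (hpf q hq).2.2.2.2.2.1)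
      have hA' : (M:ℤ) ∣ ∑ k, c' k * A k := by
        have : ∑ k, c' k * A k = (∑ k, c k * A k) - ((∑ k, c k * A k) - (∑ k, c' k * A k)) := by
          ring
        rw [this]
        exact dvd_sub hA hkeyA
      have hB' : (M:ℤ) ∣ ∑ k, c' k * B k := by
        have : ∑ k, c' k * B k = (∑ k, c k * B k) - ((∑ k, c k * B k) - (∑ k, c' k * B k)) := by
          ring
        rw [this]
        exact dvd_sub hB hkeyB
      have ht' : (M:ℤ) ∣ ∑ k, c' k * t k := by
        apply ih c' (fun k hk => hTS (hc'supp k hk)) _ hA' hB'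
        intro k hk
        have h1 := hTj k (hc'supp k hk)
        rw [Fin.lt_def] at h1
        omega
      have : ∑ k, c k * t k = ((∑ k, c k * t k) - (∑ k, c' k * t k)) + ∑ k, c' k * t k := by ring
      rw [this]
      exact dvd_add hkeyt ht'

end Stmt9Aux2

namespace Stmt9Aux2
open Stmt9Aux

lemma int_finset_gcd_bezout {N : ℕ} (S : Finset (Fin N)) (f : Fin N → ℤ) :
    ∃ cc : Fin N → ℤ, (∀ k, cc k ≠ 0 → k ∈ S) ∧
      ((S.gcd fun k => (f k).natAbs : ℕ) : ℤ) = ∑ k ∈ S, cc k * f k := by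
  classical
  induction S using Finset.induction_on with
  | empty => exact ⟨0, by simp, by simp⟩
  | @insert a s' ha ih =>
      obtain ⟨cc, hsupp, hcc⟩ := ih
      set G : ℕ := s'.gcd fun k => (f k).natAbs with hG
      set α : ℤ := Int.gcdA (f a) (G : ℤ) with hα
      set β : ℤ := Int.gcdB (f a) (G : ℤ) with hβ
      have hgcd : ((Nat.gcd (f a).natAbs G : ℕ) : ℤ) = f a * α + (G : ℤ) * β := by
        have h1 : Int.gcd (f a) ((G : ℕ) : ℤ) = Nat.gcd (f a).natAbs G := by
          unfold Int.gcd
          simp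
        rw [← h1]
        exact Int.gcd_eq_gcd_ab (f a) ((G : ℕ) : ℤ)
      refine ⟨fun k => if k = a then α else β * cc k, ?_, ?_⟩
      · intro k hk
        by_cases h : k = a
        · subst h; exact Finset.mem_insert_self _ _
        · simp only [if_neg h] at hk
          have : cc k ≠ 0 := fun h' => hk (by simp [h'])
          exact Finset.mem_insert_of_mem (hsupp k this)
      · rw [Finset.gcd_insert, Finset.sum_insert ha]
        have h2 : ∑ k ∈ s', (if k = a then α else β * cc k) * f k
            = β * ∑ k ∈ s', cc k * f k := by
          rw [Finset.mul_sum]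
          refine Finset.sum_congr rfl fun k hk => ?_
          have : k ≠ a := fun h => ha (h ▸ hk)
          simp only [if_neg this]; ring
        have hbeta : (fun k => if k = a then α else β * cc k) a = α := by simp
        rw [h2, ← hcc, hbeta]
        rw [show (gcd ((f a).natAbs) G) = Nat.gcd ((f a).natAbs) G from rfl, hgcd]
        ring

lemma ext_char (M : ℕ) (hM : 0 < M) {N : ℕ} (A B t : Fin N → ℤ) (S : Finset (Fin N))
    (hclosure : ∀ c : Fin N → ℤ, (∀ k, c k ≠ 0 → k ∈ S) → ((M:ℤ) ∣ ∑ k, c k * A k) →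
      ((M:ℤ) ∣ ∑ k, c k * B k) → (M:ℤ) ∣ ∑ k, c k * t k) :
    ∃ a b : ℤ, ∀ k ∈ S, (M:ℤ) ∣ t k - (a * A k + b * B k) := by
  classical
  have hMZ : ((M:ℤ)) ≠ 0 := by exact_mod_cast hM.ne'
  -- sums over univ restrict to S
  have huniv : ∀ (w : Fin N → ℤ), (∀ k, w k ≠ 0 → k ∈ S) → ∀ f : Fin N → ℤ,
      ∑ k, w k * f k = ∑ k ∈ S, w k * f k := by
    intro w hw f
    symm
    apply Finset.sum_subset (Finset.subset_univ S)
    intro x _ hx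
    have : w x = 0 := by
      by_contra h
      exact hx (hw x h)
    simp [this]
  -- d1 and its Bezout expression
  obtain ⟨cc, hccsupp, hcc⟩ := int_finset_gcd_bezout S A
  set g1 : ℕ := S.gcd fun k => (A k).natAbs with hg1
  set d1 : ℕ := Nat.gcd g1 M with hd1
  have hd1pos : 0 < d1 := Nat.gcd_pos_of_pos_right _ hM
  have hd1M : (d1 : ℕ) ∣ M := Nat.gcd_dvd_right _ _
  have hd1A : ∀ k ∈ S, (d1 : ℤ) ∣ A k := by
    intro k hk
    have h1 : d1 ∣ g1 := Nat.gcd_dvd_left _ _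
    have h2 : g1 ∣ (A k).natAbs := Finset.gcd_dvd hk
    have : (d1 : ℤ) ∣ ((A k).natAbs : ℤ) := Int.natCast_dvd_natCast.mpr (h1.trans h2)
    exact Int.dvd_natAbs.mp this
  -- (d1:ℤ) = ∑ c1 A + μ1 M
  obtain ⟨c1, μ1, hc1supp, hc1⟩ : ∃ (c1 : Fin N → ℤ) (μ1 : ℤ), (∀ k, c1 k ≠ 0 → k ∈ S) ∧
      (d1 : ℤ) = ∑ k ∈ S, c1 k * A k + μ1 * M := by
    refine ⟨fun k => Nat.gcdA g1 M * cc k, Nat.gcdB g1 M, ?_, ?_⟩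
    · intro k hk
      apply hccsupp k
      intro h
      simp [h] at hk
    · have hg := Nat.gcd_eq_gcd_ab g1 M
      have : ∑ k ∈ S, Nat.gcdA g1 M * cc k * A k = Nat.gcdA g1 M * ∑ k ∈ S, cc k * A k := by
        rw [Finset.mul_sum]
        exact Finset.sum_congr rfl fun k _ => by ring
      rw [this, ← hcc, hd1, hg]
      ring
  set e : ℤ := ∑ k ∈ S, c1 k * B k with he
  set x : ℤ := ∑ k ∈ S, c1 k * t k with hx
  -- J and d2
  set J : Set ℤ := {z | ∃ (cw : Fin N → ℤ) (ν1 ν2 : ℤ), (∀ k, cw k ≠ 0 → k ∈ S) ∧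
      ∑ k ∈ S, cw k * A k + ν1 * M = 0 ∧ ∑ k ∈ S, cw k * B k + ν2 * M = z} with hJ
  have hJsub : ∀ a b, a ∈ J → b ∈ J → a - b ∈ J := by
    rintro a b ⟨cw, ν1, ν2, hsupp, h1, h2⟩ ⟨cw', ν1', ν2', hsupp', g1', g2'⟩
    refine ⟨cw - cw', ν1 - ν1', ν2 - ν2', ?_, ?_, ?_⟩
    · intro k hk
      by_cases h : cw k = 0
      · exact hsupp' k (by simpa [Pi.sub_apply, h, sub_eq_zero] using hk)
      · exact hsupp k h
    · have : ∑ k ∈ S, (cw - cw') k * A k = ∑ k ∈ S, cw k * A k - ∑ k ∈ S, cw' k * A k := by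
        simp [Pi.sub_apply, sub_mul, Finset.sum_sub_distrib]
      rw [this]; linarith [h1, g1']
    · have : ∑ k ∈ S, (cw - cw') k * B k = ∑ k ∈ S, cw k * B k - ∑ k ∈ S, cw' k * B k := by
        simp [Pi.sub_apply, sub_mul, Finset.sum_sub_distrib]
      rw [this]; linarith [h2, g2']
  have hMJ : ((M:ℕ):ℤ) ∈ J := ⟨0, 0, 1, by simp, by simp, by simp⟩
  obtain ⟨d2, hd2⟩ := exists_least_pos (P := J) M hM hMJ
  have hd2pos : 0 < d2 := hd2.1.1
  have hd2dvd : ∀ z ∈ J, (d2:ℤ) ∣ z := least_pos_dvd hJsub hd2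
  have hd2M : d2 ∣ M := by
    have := hd2dvd _ hMJ
    exact_mod_cast this
  obtain ⟨c2, ν21, ν22, hc2supp, hc2A, hc2B⟩ := hd2.1.2
  set y : ℤ := ∑ k ∈ S, c2 k * t k with hy
  -- d2 ∣ y
  set R2 : ℕ := M / d2 with hR2
  have hR2d2 : (d2 * R2 : ℕ) = M := Nat.mul_div_cancel' hd2M
  have hR2pos : 0 < R2 := Nat.div_pos (Nat.le_of_dvd hM hd2M) hd2pos
  have hd2y : (d2:ℤ) ∣ y := by
    have hcl := hclosure (fun k => (R2:ℤ) * c2 k) ?hsupp ?hA ?hB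
    case hsupp =>
      intro k hk
      apply hc2supp k
      intro h
      simp [h] at hk
    case hA =>
      rw [huniv _ (fun k hk => hc2supp k (fun h => hk (by simp [h]))) A]
      have : ∑ k ∈ S, (R2:ℤ) * c2 k * A k = (R2:ℤ) * ∑ k ∈ S, c2 k * A k := by
        rw [Finset.mul_sum]; exact Finset.sum_congr rfl fun k _ => by ring
      rw [this, show ∑ k ∈ S, c2 k * A k = -(ν21 * M) by linarith [hc2A]]
      exact ⟨-((R2:ℤ) * ν21), by ring⟩
    case hB =>
      rw [huniv _ (fun k hk => hc2supp k (fun h => hk (by simp [h]))) B]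
      have h1 : ∑ k ∈ S, (R2:ℤ) * c2 k * B k = (R2:ℤ) * ∑ k ∈ S, c2 k * B k := by
        rw [Finset.mul_sum]; exact Finset.sum_congr rfl fun k _ => by ring
      rw [h1, show ∑ k ∈ S, c2 k * B k = (d2:ℤ) - ν22 * M by linarith [hc2B]]
      refine ⟨1 - (R2:ℤ) * ν22, ?_⟩
      have : ((d2:ℤ) * R2) = (M:ℤ) := by exact_mod_cast congrArg (Nat.cast : ℕ → ℤ) hR2d2
      linear_combination this
    · -- conclude
      rw [huniv _ (fun k hk => hc2supp k (fun h => hk (by simp [h]))) t] at hcl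
      have h1 : ∑ k ∈ S, (R2:ℤ) * c2 k * t k = (R2:ℤ) * y := by
        rw [hy, Finset.mul_sum]; exact Finset.sum_congr rfl fun k _ => by ring
      rw [h1] at hcl
      have hMd2R2 : (M:ℤ) = (d2:ℤ) * R2 := by exact_mod_cast (congrArg (Nat.cast : ℕ → ℤ) hR2d2).symm
      rw [hMd2R2] at hcl
      obtain ⟨w, hw⟩ := hcl
      have hR2Z : ((R2:ℕ):ℤ) ≠ 0 := by exact_mod_cast hR2pos.ne'
      refine ⟨w, ?_⟩
      have : (R2:ℤ) * y = (R2:ℤ) * ((d2:ℤ) * w) := by linear_combination hw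
      exact mul_left_cancel₀ hR2Z this
  obtain ⟨b, hb⟩ : ∃ b : ℤ, (d2:ℤ) * b = y := ⟨y / d2, Int.mul_ediv_cancel' hd2y⟩
  -- helpers
  have hmulsum : ∀ (w1 : ℤ) (cf f : Fin N → ℤ),
      ∑ k' ∈ S, (w1 * cf k') * f k' = w1 * ∑ k' ∈ S, cf k' * f k' := by
    intro w1 cf f
    rw [Finset.mul_sum]
    exact Finset.sum_congr rfl fun k _ => by ring
  have hsubsum : ∀ (cf cg f : Fin N → ℤ),
      ∑ k' ∈ S, (cf k' - cg k') * f k' = ∑ k' ∈ S, cf k' * f k' - ∑ k' ∈ S, cg k' * f k' := by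
    intro cf cg f
    rw [← Finset.sum_sub_distrib]
    exact Finset.sum_congr rfl fun k _ => by ring
  -- R1
  set R1 : ℕ := M / d1 with hR1
  have hR1d1 : (d1 * R1 : ℕ) = M := Nat.mul_div_cancel' hd1M
  have hR1d1Z : ((d1:ℤ) * (R1:ℤ)) = (M:ℤ) := by exact_mod_cast congrArg (Nat.cast : ℕ → ℤ) hR1d1
  have hR1pos : 0 < R1 := Nat.div_pos (Nat.le_of_dvd hM hd1M) hd1pos
  have hR1Z : ((R1:ℕ):ℤ) ≠ 0 := by exact_mod_cast hR1pos.ne'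
  -- (M/d1) * e ∈ J, get κ
  have hR1eJ : ((R1:ℤ) * e) ∈ J := by
    refine ⟨fun k => (R1:ℤ) * c1 k, (R1:ℤ) * μ1 - 1, 0, ?_, ?_, ?_⟩
    · intro k hk
      apply hc1supp k
      intro h
      simp [h] at hk
    · rw [hmulsum (R1:ℤ) c1 A]
      linear_combination (R1:ℤ) * hc1.symm + hR1d1Z
    · rw [hmulsum (R1:ℤ) c1 B]
      ring
  obtain ⟨κ, hκ⟩ : ∃ κ : ℤ, (d2:ℤ) * κ = (R1:ℤ) * e :=
    ⟨((R1:ℤ) * e) / d2, Int.mul_ediv_cancel' (hd2dvd _ hR1eJ)⟩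
  -- main closure application for d1 ∣ x - e*b
  have hstep7 : (M:ℤ) ∣ (R1:ℤ) * x - κ * y := by
    have hsupp7 : ∀ k, ((R1:ℤ) * c1 k - κ * c2 k) ≠ 0 → k ∈ S := by
      intro k hk
      by_cases h1 : c1 k = 0
      · by_cases h2 : c2 k = 0
        · simp [h1, h2] at hk
        · exact hc2supp k h2
      · exact hc1supp k h1
    have hcl := hclosure (fun k => (R1:ℤ) * c1 k - κ * c2 k) hsupp7 ?hA ?hB
    case hA =>
      rw [huniv _ hsupp7 A, hsubsum, hmulsum, hmulsum]
      refine ⟨1 - (R1:ℤ) * μ1 + κ * ν21, ?_⟩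
      linear_combination (R1:ℤ) * hc1.symm + hR1d1Z - κ * hc2A
    case hB =>
      rw [huniv _ hsupp7 B, hsubsum, hmulsum, hmulsum]
      refine ⟨κ * ν22, ?_⟩
      linear_combination - κ * hc2B - hκ
    · rw [huniv _ hsupp7 t, hsubsum, hmulsum, hmulsum] at hcl
      exact hcl
  have hd1xeb : (d1:ℤ) ∣ (x - e * b) := by
    have h1 : (R1:ℤ) * x - κ * y = (R1:ℤ) * (x - e * b) := by
      linear_combination (-b) * hκ + κ * hb
    rw [h1, ← hR1d1Z] at hstep7
    obtain ⟨w, hw⟩ := hstep7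
    refine ⟨w, ?_⟩
    have h2 : (R1:ℤ) * (x - e * b) = (R1:ℤ) * ((d1:ℤ) * w) := by linear_combination hw
    exact mul_left_cancel₀ hR1Z h2
  obtain ⟨a, ha⟩ : ∃ a : ℤ, (d1:ℤ) * a = x - e * b :=
    ⟨(x - e * b) / d1, Int.mul_ediv_cancel' hd1xeb⟩
  -- final
  refine ⟨a, b, ?_⟩
  intro k hk
  obtain ⟨u, hu⟩ : ∃ u : ℤ, (d1:ℤ) * u = A k :=
    ⟨A k / d1, Int.mul_ediv_cancel' (hd1A k hk)⟩
  have hdelta : ∀ f : Fin N → ℤ, ∑ k' ∈ S, (if k' = k then (1:ℤ) else 0) * f k' = f k := by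
    intro f
    rw [sum_one_point S k hk 1 f, one_mul]
  have hzkJ : (B k - u * e) ∈ J := by
    refine ⟨fun k' => (if k' = k then (1:ℤ) else 0) - u * c1 k', -(u * μ1), 0, ?_, ?_, ?_⟩
    · intro k' hk'
      by_cases h1 : k' = k
      · subst h1; exact hk
      · apply hc1supp k'
        intro h
        simp [h1, h] at hk'
    · rw [hsubsum, hmulsum, hdelta A]
      linear_combination u * hc1 - hu
    · rw [hsubsum, hmulsum, hdelta B]
      ring
  obtain ⟨v, hv⟩ : ∃ v : ℤ, (d2:ℤ) * v = B k - u * e :=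
    ⟨(B k - u * e) / d2, Int.mul_ediv_cancel' (hd2dvd _ hzkJ)⟩
  have hstep8 : (M:ℤ) ∣ t k - u * x - v * y := by
    have hsupp8 : ∀ k', ((if k' = k then (1:ℤ) else 0) - u * c1 k' - v * c2 k') ≠ 0 → k' ∈ S := by
      intro k' hk'
      by_cases h1 : k' = k
      · subst h1; exact hk
      · by_cases h2 : c1 k' = 0
        · by_cases h3 : c2 k' = 0
          · simp [h1, h2, h3] at hk'
          · exact hc2supp k' h3
        · exact hc1supp k' h2
    have hcl := hclosure (fun k' => (if k' = k then (1:ℤ) else 0) - u * c1 k' - v * c2 k')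
      hsupp8 ?hA ?hB
    case hA =>
      rw [huniv _ hsupp8 A]
      have hexp : ∑ k' ∈ S, ((if k' = k then (1:ℤ) else 0) - u * c1 k' - v * c2 k') * A k'
          = (∑ k' ∈ S, (if k' = k then (1:ℤ) else 0) * A k') - u * (∑ k' ∈ S, c1 k' * A k')
            - v * (∑ k' ∈ S, c2 k' * A k') := by
        rw [Finset.mul_sum, Finset.mul_sum, ← Finset.sum_sub_distrib, ← Finset.sum_sub_distrib]
        exact Finset.sum_congr rfl fun k' _ => by ring
      rw [hexp, hdelta A]
      refine ⟨u * μ1 + v * ν21, ?_⟩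
      linear_combination u * hc1 - hu - v * hc2A
    case hB =>
      rw [huniv _ hsupp8 B]
      have hexp : ∑ k' ∈ S, ((if k' = k then (1:ℤ) else 0) - u * c1 k' - v * c2 k') * B k'
          = (∑ k' ∈ S, (if k' = k then (1:ℤ) else 0) * B k') - u * (∑ k' ∈ S, c1 k' * B k')
            - v * (∑ k' ∈ S, c2 k' * B k') := by
        rw [Finset.mul_sum, Finset.mul_sum, ← Finset.sum_sub_distrib, ← Finset.sum_sub_distrib]
        exact Finset.sum_congr rfl fun k' _ => by ring
      rw [hexp, hdelta B]
      refine ⟨v * ν22, ?_⟩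
      linear_combination - v * hc2B - hv
    · rw [huniv _ hsupp8 t] at hcl
      have hexp : ∑ k' ∈ S, ((if k' = k then (1:ℤ) else 0) - u * c1 k' - v * c2 k') * t k'
          = (∑ k' ∈ S, (if k' = k then (1:ℤ) else 0) * t k') - u * (∑ k' ∈ S, c1 k' * t k')
            - v * (∑ k' ∈ S, c2 k' * t k') := by
        rw [Finset.mul_sum, Finset.mul_sum, ← Finset.sum_sub_distrib, ← Finset.sum_sub_distrib]
        exact Finset.sum_congr rfl fun k' _ => by ring
      rw [hexp, hdelta t] at hcl
      exact hcl
  have hAk : A k = (d1:ℤ) * u := hu.symm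
  have hBk : B k = (d2:ℤ) * v + u * e := by linarith [hv]
  rw [hAk, hBk]
  have heq : t k - (a * ((d1:ℤ) * u) + b * ((d2:ℤ) * v + u * e)) = t k - u * x - v * y := by
    linear_combination (-u) * ha + (-v) * hb
  rw [heq]
  exact hstep8

end Stmt9Aux2

namespace Stmt9Aux2

lemma main_arith (M : ℕ) (hM : 0 < M) {N : ℕ} (A B t : Fin N → ℤ) (S : Finset (Fin N))
    (H1 : ∀ k ∈ S, ∃ e : ℕ,
      IsLeast {s : ℕ | 0 < s ∧ (M:ℤ) ∣ s * A k ∧ (M:ℤ) ∣ s * B k} e ∧ (M:ℤ) ∣ e * t k)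
    (H2 : ∀ k₁ k₂, k₁ ∈ S → k₂ ∈ S → k₁ < k₂ → ∃ a b : ℕ,
      (M:ℤ) ∣ a * A k₁ + b * A k₂ ∧ (M:ℤ) ∣ a * B k₁ + b * B k₂ ∧ 0 < a ∧
      (∀ s u : ℕ, 0 < s → (M:ℤ) ∣ s * A k₁ + u * A k₂ → (M:ℤ) ∣ s * B k₁ + u * B k₂ → a ≤ s) ∧
      (M:ℤ) ∣ a * t k₁ + b * t k₂)
    (H3 : ∀ k₁ k₂ k₃, k₁ ∈ S → k₂ ∈ S → k₃ ∈ S → k₁ < k₂ → k₂ < k₃ → ∃ c d e : ℕ,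
      (M:ℤ) ∣ c * A k₁ + d * A k₂ + e * A k₃ ∧ (M:ℤ) ∣ c * B k₁ + d * B k₂ + e * B k₃ ∧ 0 < c ∧
      (∀ s u v : ℕ, 0 < s → (M:ℤ) ∣ s * A k₁ + u * A k₂ + v * A k₃ →
        (M:ℤ) ∣ s * B k₁ + u * B k₂ + v * B k₃ → c ≤ s) ∧
      (M:ℤ) ∣ c * t k₁ + d * t k₂ + e * t k₃) :
    ∃ a b : ℤ, ∀ k ∈ S, (M:ℤ) ∣ t k - (a * A k + b * B k) :=
  ext_char M hM A B t S (closure M hM A B t S H1 H2 H3)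

end Stmt9Aux2

namespace Stmt9Aux3

lemma lam_eq_one {N : ℕ} (xa ya : Fin N → ℝ) (hxa : ∀ k, 0 ≤ xa k) (hya : ∀ k, 0 ≤ ya k)
    (m : Fin N → ℕ) (hm : ∀ k, 0 < m k) (lam : ℝ) (hlam : 0 < lam)
    (h : ∀ k, xa k ^ m k = lam * ya k ^ m k)
    (hx1 : ∑ k, xa k ^ 2 = 1) (hy1 : ∑ k, ya k ^ 2 = 1) :
    ∀ k, xa k = ya k := by
  rcases le_total lam 1 with hle | hge
  · have hpt : ∀ k, xa k ≤ ya k := by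
      intro k
      have h1 : xa k ^ m k ≤ ya k ^ m k := by
        calc xa k ^ m k = lam * ya k ^ m k := h k
          _ ≤ 1 * ya k ^ m k := by
              apply mul_le_mul_of_nonneg_right hle (pow_nonneg (hya k) _)
          _ = ya k ^ m k := one_mul _
      exact (pow_le_pow_iff_left₀ (hxa k) (hya k) (hm k).ne').mp h1
    have hsq : ∀ k ∈ Finset.univ, xa k ^ 2 ≤ ya k ^ 2 := fun k _ =>
      pow_le_pow_left₀ (hxa k) (hpt k) 2
    have := (Finset.sum_eq_sum_iff_of_le hsq).mp (hx1.trans hy1.symm)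
    intro k
    have h2 : xa k ^ 2 = ya k ^ 2 := this k (Finset.mem_univ k)
    calc xa k = Real.sqrt (xa k ^ 2) := (Real.sqrt_sq (hxa k)).symm
      _ = Real.sqrt (ya k ^ 2) := by rw [h2]
      _ = ya k := Real.sqrt_sq (hya k)
  · have hpt : ∀ k, ya k ≤ xa k := by
      intro k
      have h1 : ya k ^ m k ≤ xa k ^ m k := by
        calc ya k ^ m k = 1 * ya k ^ m k := (one_mul _).symm
          _ ≤ lam * ya k ^ m k := by
              apply mul_le_mul_of_nonneg_right hge (pow_nonneg (hya k) _)
          _ = xa k ^ m k := (h k).symm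
      exact (pow_le_pow_iff_left₀ (hya k) (hxa k) (hm k).ne').mp h1
    have hsq : ∀ k ∈ Finset.univ, ya k ^ 2 ≤ xa k ^ 2 := fun k _ =>
      pow_le_pow_left₀ (hya k) (hpt k) 2
    have := (Finset.sum_eq_sum_iff_of_le hsq).mp (hy1.trans hx1.symm)
    intro k
    have h2 : ya k ^ 2 = xa k ^ 2 := this k (Finset.mem_univ k)
    calc xa k = Real.sqrt (xa k ^ 2) := (Real.sqrt_sq (hxa k)).symm
      _ = Real.sqrt (ya k ^ 2) := by rw [h2]
      _ = ya k := Real.sqrt_sq (hya k)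

end Stmt9Aux3

/-- The diagonal unitary action of `(a,b) ∈ ℤ_n × ℤ_m` on `ℂ^N` determined by integer
vectors `α, β`: the `k`-th coordinate is multiplied by `e^{2πi(aα_k/n + bβ_k/m)}`. -/
noncomputable def zact {N : ℕ} (n m : ℕ) (α β : Fin N → ℤ) (a b : ℤ)
    (x : EuclideanSpace ℂ (Fin N)) : EuclideanSpace ℂ (Fin N) :=
  WithLp.toLp 2 (fun k => Complex.exp (2 * Real.pi * Complex.I *
    (((a * α k : ℤ) : ℂ) / (n : ℂ) + ((b * β k : ℤ) : ℂ) / (m : ℂ))) * x k)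

/-- the monomial map `F_{ℤ_n×ℤ_m}` associated to the diagonal action of
`ℤ_n × ℤ_m` on `ℂ^N` (with minimal invariant exponents) satisfies the non-parallel
property: if `‖x‖ = ‖y‖ = 1` and `F(x) = λ F(y)` for some real `λ > 0`, then `x ∼ y`. -/
theorem stmt9 (n m N : ℕ) (hn : 0 < n) (hm : 0 < m) (α β : Fin N → ℤ)
    (mexp : Fin N → ℕ)
    (hmexp : ∀ k, IsLeast
      {t : ℕ | 0 < t ∧ (n : ℤ) ∣ t * α k ∧ (m : ℤ) ∣ t * β k} (mexp k))
    (aexp bexp : Fin N → Fin N → ℕ)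
    (hab : ∀ k₁ k₂, k₁ ≠ k₂ →
      (0 < aexp k₁ k₂ ∧
        (n : ℤ) ∣ aexp k₁ k₂ * α k₁ + bexp k₁ k₂ * α k₂ ∧
        (m : ℤ) ∣ aexp k₁ k₂ * β k₁ + bexp k₁ k₂ * β k₂) ∧
      ∀ t u : ℕ, 0 < t → (n : ℤ) ∣ t * α k₁ + u * α k₂ →
        (m : ℤ) ∣ t * β k₁ + u * β k₂ → aexp k₁ k₂ ≤ t)
    (cexp dexp eexp : Fin N → Fin N → Fin N → ℕ)
    (hcde : ∀ k₁ k₂ k₃, k₁ ≠ k₂ → k₁ ≠ k₃ → k₂ ≠ k₃ →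
      (0 < cexp k₁ k₂ k₃ ∧
        (n : ℤ) ∣ cexp k₁ k₂ k₃ * α k₁ + dexp k₁ k₂ k₃ * α k₂ + eexp k₁ k₂ k₃ * α k₃ ∧
        (m : ℤ) ∣ cexp k₁ k₂ k₃ * β k₁ + dexp k₁ k₂ k₃ * β k₂ + eexp k₁ k₂ k₃ * β k₃) ∧
      ∀ t u v : ℕ, 0 < t → (n : ℤ) ∣ t * α k₁ + u * α k₂ + v * α k₃ →
        (m : ℤ) ∣ t * β k₁ + u * β k₂ + v * β k₃ → cexp k₁ k₂ k₃ ≤ t)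
    (x y : EuclideanSpace ℂ (Fin N)) (hx : ‖x‖ = 1) (hy : ‖y‖ = 1)
    (lam : ℝ) (hlam : 0 < lam)
    (h1 : ∀ k, x k ^ mexp k = (lam : ℂ) * y k ^ mexp k)
    (h2 : ∀ k₁ k₂, k₁ < k₂ →
      x k₁ ^ aexp k₁ k₂ * x k₂ ^ bexp k₁ k₂ =
        (lam : ℂ) * (y k₁ ^ aexp k₁ k₂ * y k₂ ^ bexp k₁ k₂))
    (h3 : ∀ k₁ k₂ k₃, k₁ < k₂ → k₂ < k₃ →
      x k₁ ^ cexp k₁ k₂ k₃ * x k₂ ^ dexp k₁ k₂ k₃ * x k₃ ^ eexp k₁ k₂ k₃ =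
        (lam : ℂ) * (y k₁ ^ cexp k₁ k₂ k₃ * y k₂ ^ dexp k₁ k₂ k₃ * y k₃ ^ eexp k₁ k₂ k₃)) :
    ∃ a b : ℤ, x = zact n m α β a b y := by
  classical
  have hM : 0 < n * m := Nat.mul_pos hn hm
  have hMZ : ((n * m : ℕ) : ℤ) ≠ 0 := by positivity
  have hnZ : ((n : ℕ) : ℤ) ≠ 0 := by positivity
  have hmZ : ((m : ℕ) : ℤ) ≠ 0 := by positivity
  have hmpos : ∀ k, 0 < mexp k := fun k => (hmexp k).1.1
  -- norms as sums
  have hxs : ∑ k, ‖x k‖ ^ 2 = 1 := by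
    have := EuclideanSpace.norm_eq x
    rw [hx] at this
    have h' := (Real.sqrt_eq_one.mp this.symm)
    simpa using h'
  have hys : ∑ k, ‖y k‖ ^ 2 = 1 := by
    have := EuclideanSpace.norm_eq y
    rw [hy] at this
    have h' := (Real.sqrt_eq_one.mp this.symm)
    simpa using h'
  -- moduli equal
  have habs : ∀ k, ‖x k‖ ^ (mexp k) = lam * ‖y k‖ ^ (mexp k) := by
    intro k
    have := congrArg (‖·‖) (h1 k)
    simpa [norm_pow, norm_mul, Complex.norm_real, abs_of_pos hlam] using this
  have hmag : ∀ k, ‖x k‖ = ‖y k‖ :=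
    Stmt9Aux3.lam_eq_one _ _ (fun k => (norm_nonneg _)) (fun k => (norm_nonneg _))
      mexp hmpos lam hlam habs hxs hys
  have hyex : ∃ k0, y k0 ≠ 0 := by
    by_contra h
    push_neg at h
    rw [Finset.sum_eq_zero (fun k _ => by simp [h k])] at hys
    norm_num at hys
  have hlam1 : lam = 1 := by
    obtain ⟨k0, hk0⟩ := hyex
    have h0 : ‖y k0‖ ^ mexp k0 ≠ 0 :=
      pow_ne_zero _ (by simpa [map_eq_zero] using hk0)
    have hthis := habs k0
    rw [hmag k0] at hthis
    have heq : lam * (‖y k0‖ ^ mexp k0) = 1 * (‖y k0‖ ^ mexp k0) := by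
      rw [one_mul]; exact hthis.symm
    exact mul_right_cancel₀ h0 heq
  have h1' : ∀ k, x k ^ mexp k = y k ^ mexp k := by
    intro k
    have := h1 k
    rw [hlam1] at this
    simpa using this
  have h2' : ∀ k₁ k₂, k₁ < k₂ →
      x k₁ ^ aexp k₁ k₂ * x k₂ ^ bexp k₁ k₂ = y k₁ ^ aexp k₁ k₂ * y k₂ ^ bexp k₁ k₂ := by
    intro k₁ k₂ h
    have := h2 k₁ k₂ h
    rw [hlam1] at this
    simpa using this
  have h3' : ∀ k₁ k₂ k₃, k₁ < k₂ → k₂ < k₃ →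
      x k₁ ^ cexp k₁ k₂ k₃ * x k₂ ^ dexp k₁ k₂ k₃ * x k₃ ^ eexp k₁ k₂ k₃ =
        y k₁ ^ cexp k₁ k₂ k₃ * y k₂ ^ dexp k₁ k₂ k₃ * y k₃ ^ eexp k₁ k₂ k₃ := by
    intro k₁ k₂ k₃ ha hb
    have := h3 k₁ k₂ k₃ ha hb
    rw [hlam1] at this
    simpa using this
  have hx0 : ∀ k, y k = 0 → x k = 0 := by
    intro k hk
    have := hmag k
    rw [hk] at this
    simpa [map_eq_zero] using this
  -- m_k divides n*m
  have hmdvdM : ∀ k, mexp k ∣ n * m := by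
    intro k
    have hsub : ∀ a b : ℤ, ((n:ℤ) ∣ a * α k ∧ (m:ℤ) ∣ a * β k) →
        ((n:ℤ) ∣ b * α k ∧ (m:ℤ) ∣ b * β k) →
        ((n:ℤ) ∣ (a - b) * α k ∧ (m:ℤ) ∣ (a - b) * β k) := by
      rintro a b ⟨h1, h2⟩ ⟨g1, g2⟩
      constructor
      · rw [sub_mul]; exact dvd_sub h1 g1
      · rw [sub_mul]; exact dvd_sub h2 g2
    have hLeast : IsLeast {s : ℕ | 0 < s ∧
        (s : ℤ) ∈ {z : ℤ | (n:ℤ) ∣ z * α k ∧ (m:ℤ) ∣ z * β k}} (mexp k) := hmexp k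
    have := Stmt9Aux.least_pos_dvd (P := {z : ℤ | (n:ℤ) ∣ z * α k ∧ (m:ℤ) ∣ z * β k})
      (fun a b ha hb => hsub a b ha hb) hLeast ((n*m : ℕ) : ℤ)
      ⟨⟨(m:ℤ) * α k, by push_cast; ring⟩, ⟨(n:ℤ) * β k, by push_cast; ring⟩⟩
    exact_mod_cast this
  -- root of unity machinery
  set ζ : ℂ := Complex.exp (2 * Real.pi * Complex.I / (n * m : ℕ)) with hζ
  have hprim : IsPrimitiveRoot ζ (n * m) := Complex.isPrimitiveRoot_exp _ hM.ne'
  haveI : NeZero (n * m) := ⟨hM.ne'⟩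
  have htk : ∀ k, ∃ tk : ℕ, y k ≠ 0 → x k = ζ ^ tk * y k := by
    intro k
    by_cases hyk : y k = 0
    · exact ⟨0, fun h => absurd hyk h⟩
    · have hosc : (x k / y k) ^ mexp k = 1 := by
        rw [div_pow, h1' k, div_self (pow_ne_zero _ hyk)]
      obtain ⟨c, hc⟩ := hmdvdM k
      have hu : (x k / y k) ^ (n * m) = 1 := by
        rw [hc, pow_mul, hosc, one_pow]
      obtain ⟨i, _, hieq⟩ := hprim.eq_pow_of_pow_eq_one hu
      refine ⟨i, fun _ => ?_⟩
      rw [hieq, div_mul_cancel₀ _ hyk]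
  choose tk htk' using htk
  set S : Finset (Fin N) := Finset.univ.filter (fun k => y k ≠ 0) with hS
  have hmemS : ∀ k, k ∈ S ↔ y k ≠ 0 := by
    intro k
    simp [hS]
  -- value divisibilities
  have hone : ∀ (l : ℕ), ζ ^ l = 1 ↔ (n * m) ∣ l := fun l => hprim.pow_eq_one_iff_dvd l
  have hval1 : ∀ k ∈ S, (n * m) ∣ mexp k * tk k := by
    intro k hk
    have hyk := (hmemS k).mp hk
    have he := h1' k
    rw [htk' k hyk, mul_pow, ← pow_mul] at he
    have hcan : ζ ^ (tk k * mexp k) = 1 := by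
      have hyne : y k ^ mexp k ≠ 0 := pow_ne_zero _ hyk
      have h' : ζ ^ (tk k * mexp k) * y k ^ mexp k = 1 * y k ^ mexp k := by
        rw [one_mul]; exact he
      exact mul_right_cancel₀ hyne h'
    have := (hone _).mp hcan
    rwa [Nat.mul_comm (mexp k)]
  have hval2 : ∀ k₁ k₂, k₁ ∈ S → k₂ ∈ S → k₁ < k₂ →
      (n * m) ∣ aexp k₁ k₂ * tk k₁ + bexp k₁ k₂ * tk k₂ := by
    intro k₁ k₂ hk₁ hk₂ hlt
    have hy1 := (hmemS k₁).mp hk₁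
    have hy2 := (hmemS k₂).mp hk₂
    have he := h2' k₁ k₂ hlt
    rw [htk' k₁ hy1, htk' k₂ hy2, mul_pow, mul_pow, ← pow_mul, ← pow_mul] at he
    have hyne : y k₁ ^ aexp k₁ k₂ * y k₂ ^ bexp k₁ k₂ ≠ 0 :=
      mul_ne_zero (pow_ne_zero _ hy1) (pow_ne_zero _ hy2)
    have hcan : ζ ^ (tk k₁ * aexp k₁ k₂ + tk k₂ * bexp k₁ k₂) = 1 := by
      have h' : ζ ^ (tk k₁ * aexp k₁ k₂ + tk k₂ * bexp k₁ k₂)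
          * (y k₁ ^ aexp k₁ k₂ * y k₂ ^ bexp k₁ k₂)
          = 1 * (y k₁ ^ aexp k₁ k₂ * y k₂ ^ bexp k₁ k₂) := by
        rw [pow_add, one_mul]
        linear_combination he
      exact mul_right_cancel₀ hyne h'
    have := (hone _).mp hcan
    rwa [Nat.mul_comm (aexp k₁ k₂), Nat.mul_comm (bexp k₁ k₂)]
  have hval3 : ∀ k₁ k₂ k₃, k₁ ∈ S → k₂ ∈ S → k₃ ∈ S → k₁ < k₂ → k₂ < k₃ →
      (n * m) ∣ cexp k₁ k₂ k₃ * tk k₁ + dexp k₁ k₂ k₃ * tk k₂ + eexp k₁ k₂ k₃ * tk k₃ := by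
    intro k₁ k₂ k₃ hk₁ hk₂ hk₃ hlt₁ hlt₂
    have hy1 := (hmemS k₁).mp hk₁
    have hy2 := (hmemS k₂).mp hk₂
    have hy3 := (hmemS k₃).mp hk₃
    have he := h3' k₁ k₂ k₃ hlt₁ hlt₂
    rw [htk' k₁ hy1, htk' k₂ hy2, htk' k₃ hy3, mul_pow, mul_pow, mul_pow,
      ← pow_mul, ← pow_mul, ← pow_mul] at he
    have hyne : y k₁ ^ cexp k₁ k₂ k₃ * y k₂ ^ dexp k₁ k₂ k₃ * y k₃ ^ eexp k₁ k₂ k₃ ≠ 0 :=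
      mul_ne_zero (mul_ne_zero (pow_ne_zero _ hy1) (pow_ne_zero _ hy2)) (pow_ne_zero _ hy3)
    have hcan : ζ ^ (tk k₁ * cexp k₁ k₂ k₃ + tk k₂ * dexp k₁ k₂ k₃ + tk k₃ * eexp k₁ k₂ k₃) = 1 := by
      have h' : ζ ^ (tk k₁ * cexp k₁ k₂ k₃ + tk k₂ * dexp k₁ k₂ k₃ + tk k₃ * eexp k₁ k₂ k₃)
          * (y k₁ ^ cexp k₁ k₂ k₃ * y k₂ ^ dexp k₁ k₂ k₃ * y k₃ ^ eexp k₁ k₂ k₃)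
          = 1 * (y k₁ ^ cexp k₁ k₂ k₃ * y k₂ ^ dexp k₁ k₂ k₃ * y k₃ ^ eexp k₁ k₂ k₃) := by
        rw [pow_add, pow_add, one_mul]
        linear_combination he
      exact mul_right_cancel₀ hyne h'
    have := (hone _).mp hcan
    rwa [Nat.mul_comm (cexp k₁ k₂ k₃), Nat.mul_comm (dexp k₁ k₂ k₃), Nat.mul_comm (eexp k₁ k₂ k₃)]
  -- divisibility transfer helpers
  have hdvdn : ∀ X : ℤ, (((n*m : ℕ):ℤ) ∣ (m:ℤ) * X ↔ (n:ℤ) ∣ X) := by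
    intro X
    rw [show ((n*m:ℕ):ℤ) = (m:ℤ) * (n:ℤ) by push_cast; ring]
    exact mul_dvd_mul_iff_left hmZ
  have hdvdm : ∀ X : ℤ, (((n*m : ℕ):ℤ) ∣ (n:ℤ) * X ↔ (m:ℤ) ∣ X) := by
    intro X
    rw [show ((n*m:ℕ):ℤ) = (n:ℤ) * (m:ℤ) by push_cast; ring]
    exact mul_dvd_mul_iff_left hnZ
  -- hypotheses for main_arith
  have H1' : ∀ k ∈ S, ∃ e : ℕ,
      IsLeast {s : ℕ | 0 < s ∧ ((n*m:ℕ):ℤ) ∣ s * ((m:ℤ) * α k) ∧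
        ((n*m:ℕ):ℤ) ∣ s * ((n:ℤ) * β k)} e ∧ ((n*m:ℕ):ℤ) ∣ e * ((tk k : ℕ) : ℤ) := by
    intro k hk
    refine ⟨mexp k, ?_, ?_⟩
    · have hset : {s : ℕ | 0 < s ∧ ((n*m:ℕ):ℤ) ∣ s * ((m:ℤ) * α k) ∧
          ((n*m:ℕ):ℤ) ∣ s * ((n:ℤ) * β k)}
          = {t : ℕ | 0 < t ∧ (n:ℤ) ∣ t * α k ∧ (m:ℤ) ∣ t * β k} := by
        ext s
        simp only [Set.mem_setOf_eq]
        constructor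
        · rintro ⟨hs, hA, hB⟩
          refine ⟨hs, ?_, ?_⟩
          · exact (hdvdn _).mp (by
              rw [show (m:ℤ) * ((s:ℤ) * α k) = (s:ℤ) * ((m:ℤ) * α k) by ring]; exact hA)
          · exact (hdvdm _).mp (by
              rw [show (n:ℤ) * ((s:ℤ) * β k) = (s:ℤ) * ((n:ℤ) * β k) by ring]; exact hB)
        · rintro ⟨hs, hA, hB⟩
          refine ⟨hs, ?_, ?_⟩
          · rw [show (s:ℤ) * ((m:ℤ) * α k) = (m:ℤ) * ((s:ℤ) * α k) by ring]
            exact (hdvdn _).mpr hA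
          · rw [show (s:ℤ) * ((n:ℤ) * β k) = (n:ℤ) * ((s:ℤ) * β k) by ring]
            exact (hdvdm _).mpr hB
      rw [hset]
      exact hmexp k
    · exact_mod_cast hval1 k hk
  have H2' : ∀ k₁ k₂, k₁ ∈ S → k₂ ∈ S → k₁ < k₂ → ∃ a b : ℕ,
      ((n*m:ℕ):ℤ) ∣ a * ((m:ℤ) * α k₁) + b * ((m:ℤ) * α k₂) ∧
      ((n*m:ℕ):ℤ) ∣ a * ((n:ℤ) * β k₁) + b * ((n:ℤ) * β k₂) ∧ 0 < a ∧
      (∀ s u : ℕ, 0 < s → ((n*m:ℕ):ℤ) ∣ s * ((m:ℤ) * α k₁) + u * ((m:ℤ) * α k₂) →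
        ((n*m:ℕ):ℤ) ∣ s * ((n:ℤ) * β k₁) + u * ((n:ℤ) * β k₂) → a ≤ s) ∧
      ((n*m:ℕ):ℤ) ∣ a * ((tk k₁ : ℕ) : ℤ) + b * ((tk k₂ : ℕ) : ℤ) := by
    intro k₁ k₂ hk₁ hk₂ hlt
    obtain ⟨⟨hapos, hαdvd, hβdvd⟩, hmin⟩ := hab k₁ k₂ (ne_of_lt hlt)
    refine ⟨aexp k₁ k₂, bexp k₁ k₂, ?_, ?_, hapos, ?_, ?_⟩
    · rw [show ((aexp k₁ k₂ : ℤ) * ((m:ℤ) * α k₁) + (bexp k₁ k₂ : ℤ) * ((m:ℤ) * α k₂))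
        = (m:ℤ) * ((aexp k₁ k₂ : ℤ) * α k₁ + (bexp k₁ k₂ : ℤ) * α k₂) by ring]
      exact (hdvdn _).mpr hαdvd
    · rw [show ((aexp k₁ k₂ : ℤ) * ((n:ℤ) * β k₁) + (bexp k₁ k₂ : ℤ) * ((n:ℤ) * β k₂))
        = (n:ℤ) * ((aexp k₁ k₂ : ℤ) * β k₁ + (bexp k₁ k₂ : ℤ) * β k₂) by ring]
      exact (hdvdm _).mpr hβdvd
    · intro s u hs hA hB
      apply hmin s u hs
      · exact (hdvdn _).mp (by
          rw [show (m:ℤ) * ((s:ℤ) * α k₁ + (u:ℤ) * α k₂)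
            = (s:ℤ) * ((m:ℤ) * α k₁) + (u:ℤ) * ((m:ℤ) * α k₂) by ring]; exact hA)
      · exact (hdvdm _).mp (by
          rw [show (n:ℤ) * ((s:ℤ) * β k₁ + (u:ℤ) * β k₂)
            = (s:ℤ) * ((n:ℤ) * β k₁) + (u:ℤ) * ((n:ℤ) * β k₂) by ring]; exact hB)
    · exact_mod_cast hval2 k₁ k₂ hk₁ hk₂ hlt
  have H3' : ∀ k₁ k₂ k₃, k₁ ∈ S → k₂ ∈ S → k₃ ∈ S → k₁ < k₂ → k₂ < k₃ → ∃ c d e : ℕ,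
      ((n*m:ℕ):ℤ) ∣ c * ((m:ℤ) * α k₁) + d * ((m:ℤ) * α k₂) + e * ((m:ℤ) * α k₃) ∧
      ((n*m:ℕ):ℤ) ∣ c * ((n:ℤ) * β k₁) + d * ((n:ℤ) * β k₂) + e * ((n:ℤ) * β k₃) ∧ 0 < c ∧
      (∀ s u v : ℕ, 0 < s →
        ((n*m:ℕ):ℤ) ∣ s * ((m:ℤ) * α k₁) + u * ((m:ℤ) * α k₂) + v * ((m:ℤ) * α k₃) →
        ((n*m:ℕ):ℤ) ∣ s * ((n:ℤ) * β k₁) + u * ((n:ℤ) * β k₂) + v * ((n:ℤ) * β k₃) → c ≤ s) ∧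
      ((n*m:ℕ):ℤ) ∣ c * ((tk k₁ : ℕ) : ℤ) + d * ((tk k₂ : ℕ) : ℤ) + e * ((tk k₃ : ℕ) : ℤ) := by
    intro k₁ k₂ k₃ hk₁ hk₂ hk₃ hlt₁ hlt₂
    obtain ⟨⟨hcpos, hαdvd, hβdvd⟩, hmin⟩ := hcde k₁ k₂ k₃ (ne_of_lt hlt₁)
      (ne_of_lt (hlt₁.trans hlt₂)) (ne_of_lt hlt₂)
    refine ⟨cexp k₁ k₂ k₃, dexp k₁ k₂ k₃, eexp k₁ k₂ k₃, ?_, ?_, hcpos, ?_, ?_⟩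
    · rw [show ((cexp k₁ k₂ k₃ : ℤ) * ((m:ℤ) * α k₁) + (dexp k₁ k₂ k₃ : ℤ) * ((m:ℤ) * α k₂)
          + (eexp k₁ k₂ k₃ : ℤ) * ((m:ℤ) * α k₃))
        = (m:ℤ) * ((cexp k₁ k₂ k₃ : ℤ) * α k₁ + (dexp k₁ k₂ k₃ : ℤ) * α k₂
          + (eexp k₁ k₂ k₃ : ℤ) * α k₃) by ring]
      exact (hdvdn _).mpr hαdvd
    · rw [show ((cexp k₁ k₂ k₃ : ℤ) * ((n:ℤ) * β k₁) + (dexp k₁ k₂ k₃ : ℤ) * ((n:ℤ) * β k₂)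
          + (eexp k₁ k₂ k₃ : ℤ) * ((n:ℤ) * β k₃))
        = (n:ℤ) * ((cexp k₁ k₂ k₃ : ℤ) * β k₁ + (dexp k₁ k₂ k₃ : ℤ) * β k₂
          + (eexp k₁ k₂ k₃ : ℤ) * β k₃) by ring]
      exact (hdvdm _).mpr hβdvd
    · intro s u v hs hA hB
      apply hmin s u v hs
      · exact (hdvdn _).mp (by
          rw [show (m:ℤ) * ((s:ℤ) * α k₁ + (u:ℤ) * α k₂ + (v:ℤ) * α k₃)
            = (s:ℤ) * ((m:ℤ) * α k₁) + (u:ℤ) * ((m:ℤ) * α k₂) + (v:ℤ) * ((m:ℤ) * α k₃) by ring]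
          exact hA)
      · exact (hdvdm _).mp (by
          rw [show (n:ℤ) * ((s:ℤ) * β k₁ + (u:ℤ) * β k₂ + (v:ℤ) * β k₃)
            = (s:ℤ) * ((n:ℤ) * β k₁) + (u:ℤ) * ((n:ℤ) * β k₂) + (v:ℤ) * ((n:ℤ) * β k₃) by ring]
          exact hB)
    · exact_mod_cast hval3 k₁ k₂ k₃ hk₁ hk₂ hk₃ hlt₁ hlt₂
  obtain ⟨a, b, hfin⟩ := Stmt9Aux2.main_arith (n*m) hM (fun k => (m:ℤ) * α k)
    (fun k => (n:ℤ) * β k) (fun k => ((tk k : ℕ) : ℤ)) S H1' H2' H3'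
  refine ⟨a, b, ?_⟩
  ext k
  show x k = Complex.exp (2 * Real.pi * Complex.I *
    (((a * α k : ℤ) : ℂ) / (n : ℂ) + ((b * β k : ℤ) : ℂ) / (m : ℂ))) * y k
  by_cases hyk : y k = 0
  · rw [hx0 k hyk, hyk, mul_zero]
  · have hkS : k ∈ S := (hmemS k).mpr hyk
    obtain ⟨w, hw⟩ := hfin k hkS
    rw [htk' k hyk]
    congr 1
    rw [hζ, ← Complex.exp_nat_mul]
    apply Complex.exp_eq_exp_iff_exists_int.mpr
    refine ⟨w, ?_⟩
    have hwZ : ((tk k : ℕ) : ℤ) = a * ((m:ℤ) * α k) + b * ((n:ℤ) * β k) + ((n*m:ℕ):ℤ) * w := by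
      linarith [hw]
    have hcast : ((tk k : ℕ) : ℂ) = (a : ℂ) * ((m:ℂ) * (α k : ℂ))
        + (b : ℂ) * ((n:ℂ) * (β k : ℂ)) + ((n:ℂ) * (m:ℂ)) * (w : ℂ) := by
      have := congrArg (fun z : ℤ => (z : ℂ)) hwZ
      push_cast at this
      convert this using 2 <;> push_cast <;> ring
    have hn0c : (n : ℂ) ≠ 0 := by exact_mod_cast hn.ne'
    have hm0c : (m : ℂ) ≠ 0 := by exact_mod_cast hm.ne'
    have hnm0c : ((n*m : ℕ) : ℂ) ≠ 0 := by exact_mod_cast hM.ne'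
    push_cast
    rw [hcast]
    field_simp
end

section
/- Let a finite group G act on ℂ^N by diagonal unitary matrices, and let V be an invertible N×N integer matrix such that the Laurent monomial map z ↦ z^V is G-invariant and separates orbits of vectors with all entries nonzero (if all entries of z and w are nonzero and z^V = w^V then z ~ w). Let c = V^{-1}(1,…,1)ᵀ ∈ ℚ^N and Q(x) = Σ_{k=1}^N sign(c_k)|x_k|². If x, y ∈ ℂ^N have all entries nonzero, λ > 0 is real, Q(x) = Q(y), and λ·x^V = y^V, then x ~ y. -/
/-- The Laurent monomial map `z ↦ z^V` defined by an integer matrix `V`: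
the `k`-th component is `∏_j z_j^{V k j}` (integer powers). -/
noncomputable def monV {N : ℕ} (V : Matrix (Fin N) (Fin N) ℤ) (z : Fin N → ℂ) :
    Fin N → ℂ :=
  fun k => ∏ j, z j ^ V k j

/-- The vector `c = V⁻¹ (1,…,1)ᵀ ∈ ℚ^N`. -/
noncomputable def cvec {N : ℕ} (V : Matrix (Fin N) (Fin N) ℤ) : Fin N → ℚ :=
  (V.map (Int.cast : ℤ → ℚ))⁻¹.mulVec (fun _ => 1)

/-- The quadratic form `Q(x) = Σ_k sign(c_k) |x_k|²`. -/
noncomputable def Qform {N : ℕ} (V : Matrix (Fin N) (Fin N) ℤ) (x : Fin N → ℂ) : ℝ :=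
  ∑ k, Real.sign ((cvec V k : ℝ)) * ‖x k‖ ^ 2

lemma aux_nonneg (t r : ℝ) (ht : 0 < t) :
    0 ≤ Real.sign (t - 1) * (Real.sign r * ((t ^ r) ^ 2 - 1)) := by
  rcases lt_trichotomy r 0 with hr | hr | hr
  · have hsr : Real.sign r = -1 := Real.sign_of_neg hr
    rcases lt_trichotomy t 1 with ht1 | ht1 | ht1
    · have hst : Real.sign (t - 1) = -1 := Real.sign_of_neg (by linarith)
      have h1 : 1 < t ^ r := by
        rw [Real.one_lt_rpow_iff_of_pos ht]; right; exact ⟨ht1, hr⟩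
      rw [hsr, hst]; nlinarith
    · have : t - 1 = 0 := by linarith
      rw [this, Real.sign_zero, zero_mul]
    · have hst : Real.sign (t - 1) = 1 := Real.sign_of_pos (by linarith)
      have h1 : t ^ r < 1 := Real.rpow_lt_one_of_one_lt_of_neg ht1 hr
      have h0 : 0 < t ^ r := Real.rpow_pos_of_pos ht r
      rw [hsr, hst]; nlinarith
  · rw [hr, Real.sign_zero, zero_mul, mul_zero]
  · have hsr : Real.sign r = 1 := Real.sign_of_pos hr
    rcases lt_trichotomy t 1 with ht1 | ht1 | ht1
    · have hst : Real.sign (t - 1) = -1 := Real.sign_of_neg (by linarith)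
      have h1 : t ^ r < 1 := Real.rpow_lt_one ht.le ht1 hr
      have h0 : 0 < t ^ r := Real.rpow_pos_of_pos ht r
      rw [hsr, hst]; nlinarith
    · have : t - 1 = 0 := by linarith
      rw [this, Real.sign_zero, zero_mul]
    · have hst : Real.sign (t - 1) = 1 := Real.sign_of_pos (by linarith)
      have h1 : 1 < t ^ r := by
        rw [Real.one_lt_rpow_iff_of_pos ht]; left; exact ⟨ht1, hr⟩
      rw [hsr, hst]; nlinarith

lemma aux_eq_one (t r : ℝ) (ht : 0 < t)
    (h : Real.sign r * ((t ^ r) ^ 2 - 1) = 0) : t ^ r = 1 := by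
  rcases eq_or_ne r 0 with hr | hr
  · rw [hr, Real.rpow_zero]
  · have hsr : Real.sign r ≠ 0 := fun h0 => hr (Real.sign_eq_zero_iff.mp h0)
    have h2 : (t ^ r) ^ 2 - 1 = 0 := by
      rcases mul_eq_zero.mp h with h' | h'
      · exact absurd h' hsr
      · exact h'
    have h0 : 0 < t ^ r := Real.rpow_pos_of_pos ht r
    have h3 : (t ^ r - 1) * (t ^ r + 1) = 0 := by ring_nf; nlinarith
    rcases mul_eq_zero.mp h3 with h' | h'
    · linarith
    · linarith

/-- let a finite group `G` act on `ℂ^N` by diagonal unitary matrices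
(`g` multiplies the `k`-th coordinate by the unimodular number `u g k`), and let `V` be
an invertible integer matrix such that `z ↦ z^V` is `G`-invariant and separates orbits
of vectors with all entries nonzero.  If `x, y` have all entries nonzero, `λ > 0`,
`Q(x) = Q(y)` and `λ x^V = y^V`, then `x ∼ y`. -/
theorem stmt11 (N : ℕ) (G : Type) [Group G] [Fintype G]
    (u : G → Fin N → ℂ)
    (huabs : ∀ g k, ‖u g k‖ = 1)
    (huone : ∀ k, u 1 k = 1)
    (humul : ∀ g h k, u (g * h) k = u g k * u h k)
    (V : Matrix (Fin N) (Fin N) ℤ) (hV : V.det ≠ 0)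
    (hGinv : ∀ g (z : Fin N → ℂ), (∀ k, z k ≠ 0) →
      monV V (fun k => u g k * z k) = monV V z)
    (hsep : ∀ z w : Fin N → ℂ, (∀ k, z k ≠ 0) → (∀ k, w k ≠ 0) →
      monV V z = monV V w → ∃ g, z = fun k => u g k * w k)
    (x y : Fin N → ℂ) (hx : ∀ k, x k ≠ 0) (hy : ∀ k, y k ≠ 0)
    (lam : ℝ) (hlam : 0 < lam)
    (hQ : Qform V x = Qform V y)
    (hmon : ∀ k, (lam : ℂ) * monV V x k = monV V y k) :
    ∃ g, x = fun k => u g k * y k := by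
  classical
  set c : Fin N → ℚ := cvec V with hc_def
  -- the key algebraic property of c : V c = (1,…,1)
  have hdet : IsUnit (V.map (Int.cast : ℤ → ℚ)).det := by
    have : (V.map (Int.cast : ℤ → ℚ)).det = ((V.det : ℚ)) :=
      ((Int.castRingHom ℚ).map_det V).symm
    rw [this, isUnit_iff_ne_zero]
    exact_mod_cast hV
  have hVc : ∀ k, ∑ j, ((V k j : ℚ)) * c j = 1 := by
    have h1 : (V.map (Int.cast : ℤ → ℚ)).mulVec c = fun _ => 1 := by
      rw [hc_def, cvec, Matrix.mulVec_mulVec, Matrix.mul_nonsing_inv _ hdet,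
        Matrix.one_mulVec]
    intro k
    have := congrFun h1 k
    simpa [Matrix.mulVec, dotProduct, Matrix.map_apply] using this
  have hVcR : ∀ k, ∑ j, ((c j : ℝ)) * ((V k j : ℝ)) = 1 := by
    intro k
    have := hVc k
    have : ((∑ j, ((V k j : ℚ)) * c j : ℚ) : ℝ) = 1 := by rw [this]; norm_num
    push_cast at this
    rw [← this]
    exact Finset.sum_congr rfl fun j _ => by ring
  -- the scaling factors
  set t : Fin N → ℝ := fun j => lam ^ ((c j : ℝ)) with ht_def
  have ht_pos : ∀ j, 0 < t j := fun j => Real.rpow_pos_of_pos hlam _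
  -- product of scaling factors along a row of V equals lam
  have hprod : ∀ k, ∏ j, t j ^ (V k j) = lam := by
    intro k
    have step : ∀ j, t j ^ (V k j) = Real.exp (Real.log lam * ((c j : ℝ) * (V k j : ℝ))) := by
      intro j
      rw [← Real.rpow_intCast (t j) (V k j), ht_def]
      simp only
      rw [← Real.rpow_mul hlam.le, Real.rpow_def_of_pos hlam]
    rw [Finset.prod_congr rfl (fun j _ => step j), ← Real.exp_sum, ← Finset.mul_sum,
      hVcR k, mul_one, Real.exp_log hlam]
  -- the rescaled vector x'
  set x' : Fin N → ℂ := fun j => (t j : ℂ) * x j with hx'_def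
  have hx' : ∀ k, x' k ≠ 0 := fun k =>
    mul_ne_zero (by exact_mod_cast (ht_pos k).ne') (hx k)
  have hmonx' : monV V x' = monV V y := by
    funext k
    unfold monV
    rw [show (∏ j, x' j ^ V k j) = ∏ j, ((t j : ℂ) ^ (V k j) * (x j) ^ (V k j)) from
      Finset.prod_congr rfl fun j _ => mul_zpow _ _ _, Finset.prod_mul_distrib]
    have hc1 : ∏ j, (t j : ℂ) ^ (V k j) = ((lam : ℝ) : ℂ) := by
      rw [← hprod k]
      push_cast
      rfl
    rw [hc1]
    exact hmon k
  obtain ⟨g, hg⟩ := hsep x' y hx' hy hmonx'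
  -- moduli relation
  have habs : ∀ k, ‖y k‖ = t k * ‖x k‖ := by
    intro k
    have := congrFun hg k
    have h1 : ‖x' k‖ = ‖u g k‖ * ‖y k‖ := by
      rw [this, norm_mul]
    rw [huabs g k, one_mul] at h1
    rw [← h1, hx'_def]
    simp only
    rw [norm_mul, Complex.norm_real, Real.norm_eq_abs, abs_of_pos (ht_pos k)]
  -- the quadratic-form identity forces all t k = 1
  have htone : ∀ k, t k = 1 := by
    by_cases hl1 : lam = 1
    · intro k
      rw [ht_def]
      simp [hl1, Real.one_rpow]
    · have hsum : ∑ k, Real.sign ((c k : ℝ)) * ((t k) ^ 2 - 1) * (‖x k‖) ^ 2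
          = 0 := by
        have h2 : Qform V y = ∑ k, Real.sign ((c k : ℝ)) * ((t k) ^ 2 * (‖x k‖) ^ 2) := by
          unfold Qform
          refine Finset.sum_congr rfl fun k _ => ?_
          rw [habs k, mul_pow, ← hc_def]
        have h1 : Qform V x = ∑ k, Real.sign ((c k : ℝ)) * (‖x k‖) ^ 2 := by
          unfold Qform
          rw [← hc_def]
        rw [show (∑ k, Real.sign ((c k : ℝ)) * ((t k) ^ 2 - 1) * (‖x k‖) ^ 2)
            = (∑ k, Real.sign ((c k : ℝ)) * ((t k) ^ 2 * (‖x k‖) ^ 2))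
              - ∑ k, Real.sign ((c k : ℝ)) * (‖x k‖) ^ 2 from by
          rw [← Finset.sum_sub_distrib]
          exact Finset.sum_congr rfl fun k _ => by ring]
        rw [← h2, ← h1, hQ, sub_self]
      have hslam : Real.sign (lam - 1) ≠ 0 := by
        rw [Ne, Real.sign_eq_zero_iff, sub_eq_zero]
        exact hl1
      have hzero : ∀ k ∈ Finset.univ,
          Real.sign (lam - 1) * (Real.sign ((c k : ℝ)) * ((t k) ^ 2 - 1) * (‖x k‖) ^ 2) = 0 := by
        rw [← Finset.sum_eq_zero_iff_of_nonneg]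
        · rw [← Finset.mul_sum, hsum, mul_zero]
        · intro k _
          have h1 : 0 ≤ Real.sign (lam - 1) * (Real.sign ((c k : ℝ)) * ((t k) ^ 2 - 1)) := by
            have := aux_nonneg lam ((c k : ℝ)) hlam
            rw [ht_def]
            exact this
          have h2 : 0 ≤ (‖x k‖) ^ 2 := sq_nonneg _
          calc (0:ℝ) ≤ (Real.sign (lam - 1) * (Real.sign ((c k : ℝ)) * ((t k) ^ 2 - 1)))
                * (‖x k‖) ^ 2 := mul_nonneg h1 h2
            _ = Real.sign (lam - 1) * (Real.sign ((c k : ℝ)) * ((t k) ^ 2 - 1) * (‖x k‖) ^ 2) := by ring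
      intro k
      have hk := hzero k (Finset.mem_univ k)
      have hxk : (‖x k‖) ^ 2 ≠ 0 :=
        pow_ne_zero 2 (norm_ne_zero_iff.mpr (hx k))
      have hterm : Real.sign ((c k : ℝ)) * ((t k) ^ 2 - 1) = 0 := by
        rcases mul_eq_zero.mp hk with h' | h'
        · exact absurd h' hslam
        · rcases mul_eq_zero.mp h' with h'' | h''
          · exact h''
          · exact absurd h'' hxk
      have := aux_eq_one lam ((c k : ℝ)) hlam (by rw [ht_def] at hterm; exact hterm)
      rw [ht_def]
      exact this
  -- conclude: x' = x
  have hx'x : x' = x := by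
    funext k
    rw [hx'_def]
    simp only
    rw [htone k, Complex.ofReal_one, one_mul]
  rw [← hx'x]
  exact ⟨g, hg⟩
end

section
/- Let a finite group G act on ℂ^N by diagonal unitary matrices, and let V be an invertible N×N integer matrix such that z ↦ z^V is G-invariant and separates orbits of vectors with all entries nonzero. Let c = V^{-1}(1,…,1)ᵀ ∈ ℚ^N and Q(x) = Σ_{k=1}^N sign(c_k)|x_k|², and suppose there is at least one index k with c_k < 0. Define, for x with Q(x) ≠ 0, 𝒢(x) = (sign Q(x), √|Q(x)| · (x/√|Q(x)|)^V) ∈ {−1,1} × ℂ^N. If x, y ∈ ℂ^N have all entries nonzero, Q(x) ≠ 0, Q(y) ≠ 0, and 𝒢(x) = 𝒢(y), then x ~ y. -/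
/-- The map `𝒢(x) = (sign Q(x), √|Q(x)| · (x/√|Q(x)|)^V)`. -/
noncomputable def Gmap {N : ℕ} (V : Matrix (Fin N) (Fin N) ℤ) (x : Fin N → ℂ) :
    ℝ × (Fin N → ℂ) :=
  (Real.sign (Qform V x),
    fun k => ((Real.sqrt |Qform V x| : ℝ) : ℂ) *
      monV V (fun j => x j / ((Real.sqrt |Qform V x| : ℝ) : ℂ)) k)

lemma Vc_one {N : ℕ} (V : Matrix (Fin N) (Fin N) ℤ) (hV : V.det ≠ 0) (k : Fin N) :
    ∑ j, (V k j : ℚ) * cvec V j = 1 := by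
  set A := V.map (Int.cast : ℤ → ℚ) with hA
  have hdet : A.det ≠ 0 := by
    rw [hA, show V.map (Int.cast : ℤ → ℚ) = (Int.castRingHom ℚ).mapMatrix V from rfl,
      ← RingHom.map_det]
    simp only [eq_intCast, Int.cast_eq_zero]
    exact_mod_cast hV
  have h : A.mulVec (cvec V) = (fun _ => 1) := by
    rw [show cvec V = A⁻¹.mulVec (fun _ => 1) from rfl, Matrix.mulVec_mulVec,
      Matrix.mul_nonsing_inv _ (isUnit_iff_ne_zero.2 hdet), Matrix.one_mulVec]
  have := congrFun h k
  simpa [Matrix.mulVec, dotProduct, hA] using this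

lemma mon_scale {N : ℕ} (V : Matrix (Fin N) (Fin N) ℤ) (hV : V.det ≠ 0)
    (μ : ℝ) (hμ : 0 < μ) (z : Fin N → ℂ) (k : Fin N) :
    monV V (fun j => ((μ ^ ((cvec V j : ℝ)) : ℝ) : ℂ) * z j) k = (μ : ℂ) * monV V z k := by
  unfold monV
  simp only [mul_zpow]
  rw [Finset.prod_mul_distrib]
  congr 1
  have step : ∀ j : Fin N, ((μ ^ ((cvec V j : ℝ)) : ℝ) : ℂ) ^ (V k j)
      = ((μ ^ (((cvec V j : ℝ)) * (V k j : ℝ)) : ℝ) : ℂ) := by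
    intro j
    rw [← Complex.ofReal_zpow, ← Real.rpow_intCast (μ ^ _), ← Real.rpow_mul hμ.le]
  rw [Finset.prod_congr rfl (fun j _ => step j), ← Complex.ofReal_prod,
    ← Real.rpow_sum_of_pos hμ]
  have hsum : ∑ j, ((cvec V j : ℝ) * (V k j : ℝ)) = 1 := by
    have h1 := Vc_one V hV k
    have h2 : ((∑ j, (V k j : ℚ) * cvec V j : ℚ) : ℝ) = 1 := by rw [h1]; norm_num
    rw [← h2]
    push_cast
    exact Finset.sum_congr rfl fun j _ => by ring
  rw [hsum, Real.rpow_one]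

lemma Q_div {N : ℕ} (V : Matrix (Fin N) (Fin N) ℤ) (z : Fin N → ℂ) (s : ℝ) (hs : 0 < s) :
    Qform V (fun k => z k / (s : ℂ)) = Qform V z / s ^ 2 := by
  unfold Qform
  rw [Finset.sum_div]
  refine Finset.sum_congr rfl fun k _ => ?_
  rw [norm_div, Complex.norm_real, Real.norm_of_nonneg hs.le, div_pow]
  ring

lemma div_abs_sign (a : ℝ) (ha : a ≠ 0) : a / |a| = Real.sign a := by
  rcases ha.lt_or_gt with h | h
  · rw [Real.sign_of_neg h, abs_of_neg h]; field_simp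
  · rw [Real.sign_of_pos h, abs_of_pos h]; field_simp

/-- let a finite group `G` act on `ℂ^N` by diagonal unitary matrices, and
let `V` be an invertible integer matrix such that `z ↦ z^V` is `G`-invariant and
separates orbits of vectors with all entries nonzero.  Suppose some entry of
`c = V⁻¹(1,…,1)ᵀ` is negative.  If `x, y` have all entries nonzero, `Q(x) ≠ 0`,
`Q(y) ≠ 0`, and `𝒢(x) = 𝒢(y)`, then `x ∼ y`. -/
theorem stmt12 (N : ℕ) (G : Type) [Group G] [Fintype G]
    (u : G → Fin N → ℂ)
    (huabs : ∀ g k, ‖u g k‖ = 1)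
    (huone : ∀ k, u 1 k = 1)
    (humul : ∀ g h k, u (g * h) k = u g k * u h k)
    (V : Matrix (Fin N) (Fin N) ℤ) (hV : V.det ≠ 0)
    (hGinv : ∀ g (z : Fin N → ℂ), (∀ k, z k ≠ 0) →
      monV V (fun k => u g k * z k) = monV V z)
    (hsep : ∀ z w : Fin N → ℂ, (∀ k, z k ≠ 0) → (∀ k, w k ≠ 0) →
      monV V z = monV V w → ∃ g, z = fun k => u g k * w k)
    (hneg : ∃ k, cvec V k < 0)
    (x y : Fin N → ℂ) (hx : ∀ k, x k ≠ 0) (hy : ∀ k, y k ≠ 0)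
    (hQx : Qform V x ≠ 0) (hQy : Qform V y ≠ 0)
    (hG : Gmap V x = Gmap V y) :
    ∃ g, x = fun k => u g k * y k := by
  obtain ⟨k₀, hk₀⟩ := hneg
  set s : ℝ := Real.sqrt |Qform V x| with hs_def
  set t : ℝ := Real.sqrt |Qform V y| with ht_def
  have hQxpos : 0 < |Qform V x| := abs_pos.2 hQx
  have hQypos : 0 < |Qform V y| := abs_pos.2 hQy
  have hs : 0 < s := Real.sqrt_pos.2 hQxpos
  have ht : 0 < t := Real.sqrt_pos.2 hQypos
  have hs2 : s ^ 2 = |Qform V x| := Real.sq_sqrt (abs_nonneg _)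
  have ht2 : t ^ 2 = |Qform V y| := Real.sq_sqrt (abs_nonneg _)
  have hsC : (s : ℂ) ≠ 0 := by exact_mod_cast hs.ne'
  have htC : (t : ℂ) ≠ 0 := by exact_mod_cast ht.ne'
  simp only [Gmap, Prod.mk.injEq] at hG
  obtain ⟨h1, h2⟩ := hG
  set x' : Fin N → ℂ := fun j => x j / (s : ℂ) with hx'_def
  set y' : Fin N → ℂ := fun j => y j / (t : ℂ) with hy'_def
  have h2' : ∀ k, (s : ℂ) * monV V x' k = (t : ℂ) * monV V y' k := fun k => congrFun h2 k
  set lam : ℝ := t / s with hlam_def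
  have hlam : 0 < lam := div_pos ht hs
  set y'' : Fin N → ℂ := fun j => ((lam ^ ((cvec V j : ℝ)) : ℝ) : ℂ) * y' j with hy''_def
  have hx'ne : ∀ k, x' k ≠ 0 := fun k => div_ne_zero (hx k) hsC
  have hy'ne : ∀ k, y' k ≠ 0 := fun k => div_ne_zero (hy k) htC
  have hrp : ∀ j : Fin N, (0 : ℝ) < lam ^ ((cvec V j : ℝ)) := fun j => Real.rpow_pos_of_pos hlam _
  have hy''ne : ∀ k, y'' k ≠ 0 := by
    intro k
    exact mul_ne_zero (by exact_mod_cast (hrp k).ne') (hy'ne k)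
  have hmon : monV V x' = monV V y'' := by
    funext k
    have hsc := mon_scale V hV lam hlam y' k
    rw [hy''_def, hsc]
    have : ((lam : ℝ) : ℂ) = (t : ℂ) / (s : ℂ) := by
      rw [hlam_def]; push_cast; ring
    rw [this]
    field_simp
    linear_combination h2' k
  obtain ⟨g, hg⟩ := hsep x' y'' hx'ne hy''ne hmon
  have habs : ∀ k, ‖x' k‖ = lam ^ ((cvec V k : ℝ)) * ‖y' k‖ := by
    intro k
    rw [congrFun hg k]
    simp only [hy''_def, norm_mul, huabs, Complex.norm_real, Real.norm_eq_abs, one_mul,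
      abs_of_pos (hrp k)]
  have hQx' : Qform V x' = Real.sign (Qform V x) := by
    rw [hx'_def, Q_div V x s hs, hs2, div_abs_sign _ hQx]
  have hQy' : Qform V y' = Real.sign (Qform V y) := by
    rw [hy'_def, Q_div V y t ht, ht2, div_abs_sign _ hQy]
  have key : ∑ k, Real.sign ((cvec V k : ℝ)) *
        (lam ^ ((cvec V k : ℝ)) * ‖y' k‖) ^ 2
      = ∑ k, Real.sign ((cvec V k : ℝ)) * ‖y' k‖ ^ 2 := by
    have e1 : Qform V x' = ∑ k, Real.sign ((cvec V k : ℝ)) *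
        (lam ^ ((cvec V k : ℝ)) * ‖y' k‖) ^ 2 := by
      unfold Qform
      exact Finset.sum_congr rfl fun k _ => by rw [habs k]
    have e2 : (∑ k, Real.sign ((cvec V k : ℝ)) * ‖y' k‖ ^ 2) = Qform V y' := rfl
    rw [← e1, e2, hQx', hQy', h1]
  have hy'pos : ∀ k, 0 < ‖y' k‖ := fun k => (norm_pos_iff.mpr (hy'ne k))
  have hlam1 : lam = 1 := by
    by_contra hne
    rcases lt_or_gt_of_ne hne with hlt | hgt
    · -- lam < 1 : LHS < RHS
      have : (∑ k, Real.sign ((cvec V k : ℝ)) *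
          (lam ^ ((cvec V k : ℝ)) * ‖y' k‖) ^ 2)
          < ∑ k, Real.sign ((cvec V k : ℝ)) * ‖y' k‖ ^ 2 := by
        apply Finset.sum_lt_sum
        · intro k _
          rcases lt_trichotomy (cvec V k) 0 with hc | hc | hc
          · have hcR : ((cvec V k : ℝ)) < 0 := by exact_mod_cast hc
            rw [Real.sign_of_neg hcR]
            have h1l : 1 < lam ^ ((cvec V k : ℝ)) :=
              Real.one_lt_rpow_of_pos_of_lt_one_of_neg hlam hlt hcR
            have hsq : ‖y' k‖ ^ 2
                ≤ (lam ^ ((cvec V k : ℝ)) * ‖y' k‖) ^ 2 :=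
              pow_le_pow_left₀ (norm_nonneg _)
                (le_mul_of_one_le_left (norm_nonneg _) h1l.le) 2
            linarith
          · simp [hc]
          · have hcR : (0:ℝ) < ((cvec V k : ℝ)) := by exact_mod_cast hc
            rw [Real.sign_of_pos hcR]
            have h1l : lam ^ ((cvec V k : ℝ)) ≤ 1 :=
              Real.rpow_le_one hlam.le hlt.le hcR.le
            have hsq : (lam ^ ((cvec V k : ℝ)) * ‖y' k‖) ^ 2
                ≤ ‖y' k‖ ^ 2 :=
              pow_le_pow_left₀ (mul_nonneg (hrp k).le (norm_nonneg _))
                (mul_le_of_le_one_left (norm_nonneg _) h1l) 2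
            linarith
        · refine ⟨k₀, Finset.mem_univ _, ?_⟩
          have hcR : ((cvec V k₀ : ℝ)) < 0 := by exact_mod_cast hk₀
          rw [Real.sign_of_neg hcR]
          have h1l : 1 < lam ^ ((cvec V k₀ : ℝ)) :=
            Real.one_lt_rpow_of_pos_of_lt_one_of_neg hlam hlt hcR
          have hsq : ‖y' k₀‖ ^ 2
              < (lam ^ ((cvec V k₀ : ℝ)) * ‖y' k₀‖) ^ 2 :=
            pow_lt_pow_left₀ (lt_mul_of_one_lt_left (hy'pos k₀) h1l)
              (norm_nonneg _) two_ne_zero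
          linarith
      rw [key] at this
      exact lt_irrefl _ this
    · -- 1 < lam : RHS < LHS
      have : (∑ k, Real.sign ((cvec V k : ℝ)) * ‖y' k‖ ^ 2)
          < ∑ k, Real.sign ((cvec V k : ℝ)) *
          (lam ^ ((cvec V k : ℝ)) * ‖y' k‖) ^ 2 := by
        apply Finset.sum_lt_sum
        · intro k _
          rcases lt_trichotomy (cvec V k) 0 with hc | hc | hc
          · have hcR : ((cvec V k : ℝ)) < 0 := by exact_mod_cast hc
            rw [Real.sign_of_neg hcR]
            have h1l : lam ^ ((cvec V k : ℝ)) < 1 :=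
              Real.rpow_lt_one_of_one_lt_of_neg hgt hcR
            have hsq : (lam ^ ((cvec V k : ℝ)) * ‖y' k‖) ^ 2
                ≤ ‖y' k‖ ^ 2 :=
              pow_le_pow_left₀ (mul_nonneg (hrp k).le (norm_nonneg _))
                (mul_le_of_le_one_left (norm_nonneg _) h1l.le) 2
            linarith
          · simp [hc]
          · have hcR : (0:ℝ) < ((cvec V k : ℝ)) := by exact_mod_cast hc
            rw [Real.sign_of_pos hcR]
            have h1l : 1 ≤ lam ^ ((cvec V k : ℝ)) :=
              Real.one_le_rpow hgt.le hcR.le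
            have hsq : ‖y' k‖ ^ 2
                ≤ (lam ^ ((cvec V k : ℝ)) * ‖y' k‖) ^ 2 :=
              pow_le_pow_left₀ (norm_nonneg _)
                (le_mul_of_one_le_left (norm_nonneg _) h1l) 2
            linarith
        · refine ⟨k₀, Finset.mem_univ _, ?_⟩
          have hcR : ((cvec V k₀ : ℝ)) < 0 := by exact_mod_cast hk₀
          rw [Real.sign_of_neg hcR]
          have h1l : lam ^ ((cvec V k₀ : ℝ)) < 1 :=
            Real.rpow_lt_one_of_one_lt_of_neg hgt hcR
          have hsq : (lam ^ ((cvec V k₀ : ℝ)) * ‖y' k₀‖) ^ 2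
              < ‖y' k₀‖ ^ 2 :=
            pow_lt_pow_left₀ (mul_lt_of_lt_one_left (hy'pos k₀) h1l)
              (mul_nonneg (hrp k₀).le (norm_nonneg _)) two_ne_zero
          linarith
      rw [key] at this
      exact lt_irrefl _ this
  have hts : t = s := by
    have := hlam_def ▸ hlam1
    field_simp at this
    exact this
  refine ⟨g, funext fun k => ?_⟩
  have hk := congrFun hg k
  rw [hx'_def] at hk
  simp only [hy''_def, hlam1, Real.one_rpow, Complex.ofReal_one, one_mul, hy'_def, hts] at hk
  field_simp at hk
  exact hk
end

section
/- Let a finite group G act on ℂ^N by diagonal unitary matrices, and let V be an invertible N×N integer matrix such that z ↦ z^V is G-invariant and separates orbits of vectors with all entries nonzero. Let c = V^{-1}(1,…,1)ᵀ ∈ ℚ^N and suppose c_k ≥ 0 for all 1 ≤ k ≤ N. Define g(x) = ‖x‖ · (x/‖x‖)^V for x ≠ 0. If x, y ∈ ℂ^N have all entries nonzero and g(x) = g(y), then x ~ y. -/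
/-- The map `g(x) = ‖x‖ (x/‖x‖)^V` (with the Euclidean norm of `x`). -/
noncomputable def gmap {N : ℕ} (V : Matrix (Fin N) (Fin N) ℤ)
    (x : EuclideanSpace ℂ (Fin N)) : Fin N → ℂ :=
  fun k => ((‖x‖ : ℝ) : ℂ) * monV V (fun j => x j / ((‖x‖ : ℝ) : ℂ)) k

/-- let a finite group `G` act on `ℂ^N` by diagonal unitary matrices, and
let `V` be an invertible integer matrix such that `z ↦ z^V` is `G`-invariant and
separates orbits of vectors with all entries nonzero.  Suppose every entry of
`c = V⁻¹(1,…,1)ᵀ` is nonnegative.  If `x, y` have all entries nonzero and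
`g(x) = g(y)`, then `x ∼ y`. -/
theorem stmt13 (N : ℕ) (G : Type) [Group G] [Fintype G]
    (u : G → Fin N → ℂ)
    (huabs : ∀ g k, ‖u g k‖ = 1)
    (huone : ∀ k, u 1 k = 1)
    (humul : ∀ g h k, u (g * h) k = u g k * u h k)
    (V : Matrix (Fin N) (Fin N) ℤ) (hV : V.det ≠ 0)
    (hGinv : ∀ g (z : Fin N → ℂ), (∀ k, z k ≠ 0) →
      monV V (fun k => u g k * z k) = monV V z)
    (hsep : ∀ z w : Fin N → ℂ, (∀ k, z k ≠ 0) → (∀ k, w k ≠ 0) →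
      monV V z = monV V w → ∃ g, z = fun k => u g k * w k)
    (hc : ∀ k, 0 ≤ cvec V k)
    (x y : EuclideanSpace ℂ (Fin N)) (hx : ∀ k, x k ≠ 0) (hy : ∀ k, y k ≠ 0)
    (hg : gmap V x = gmap V y) :
    ∃ g, ∀ k, x k = u g k * y k := by
  rcases Nat.eq_zero_or_pos N with rfl | hN
  · exact ⟨1, fun k => k.elim0⟩
  set r := ‖x‖ with hr'
  set s := ‖y‖ with hs'
  have hxne : x ≠ 0 := fun h => hx ⟨0, hN⟩ (by rw [h]; rfl)
  have hyne : y ≠ 0 := fun h => hy ⟨0, hN⟩ (by rw [h]; rfl)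
  have hr : 0 < r := norm_pos_iff.mpr hxne
  have hs : 0 < s := norm_pos_iff.mpr hyne
  set a : Fin N → ℝ := fun j => ‖x j‖ / r with ha'
  set b : Fin N → ℝ := fun j => ‖y j‖ / s with hb'
  have ha : ∀ j, 0 < a j := fun j =>
    div_pos (norm_pos_iff.mpr (hx j)) hr
  have hb : ∀ j, 0 < b j := fun j =>
    div_pos (norm_pos_iff.mpr (hy j)) hs
  -- absolute values of the equality
  have habs : ∀ k, r * ∏ j, a j ^ V k j = s * ∏ j, b j ^ V k j := by
    intro k
    have h := congrFun hg k
    simp only [gmap, monV] at h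
    have h2 := congrArg norm h
    rw [norm_mul, norm_mul, norm_prod, norm_prod] at h2
    simpa [ha', hb', norm_zpow, norm_div, Complex.norm_real, Real.norm_eq_abs,
      abs_of_pos hr, abs_of_pos hs] using h2
  -- logarithms
  set t := Real.log s - Real.log r with ht'
  have hlog : ∀ k, ∑ j, (V k j : ℝ) * (Real.log (a j) - Real.log (b j)) = t := by
    intro k
    have h := habs k
    have h1 : Real.log (r * ∏ j, a j ^ V k j) = Real.log (s * ∏ j, b j ^ V k j) := by
      rw [h]
    rw [Real.log_mul hr.ne' (Finset.prod_ne_zero_iff.mpr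
          (fun j _ => zpow_ne_zero _ (ha j).ne')),
        Real.log_mul hs.ne' (Finset.prod_ne_zero_iff.mpr
          (fun j _ => zpow_ne_zero _ (hb j).ne')),
        Real.log_prod (fun j _ => zpow_ne_zero _ (ha j).ne'),
        Real.log_prod (fun j _ => zpow_ne_zero _ (hb j).ne')] at h1
    simp only [Real.log_zpow] at h1
    have : ∑ j, (V k j : ℝ) * (Real.log (a j) - Real.log (b j))
        = (∑ j, (V k j : ℝ) * Real.log (a j)) - ∑ j, (V k j : ℝ) * Real.log (b j) := by
      rw [← Finset.sum_sub_distrib]; congr 1; ext j; ring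
    rw [this, ht']
    linarith
  -- matrix inversion over ℝ
  set Vq := V.map (Int.cast : ℤ → ℚ) with hVq'
  set Vr := V.map (Int.cast : ℤ → ℝ) with hVr'
  have hdetq : Vq.det ≠ 0 := by
    have hq : Vq.det = ((V.det : ℤ) : ℚ) := (RingHom.map_det (Int.castRingHom ℚ) V).symm
    rw [hq]
    exact_mod_cast hV
  have hdetr : Vr.det ≠ 0 := by
    have hq : Vr.det = ((V.det : ℤ) : ℝ) := (RingHom.map_det (Int.castRingHom ℝ) V).symm
    rw [hq]
    exact_mod_cast hV
  set cr : Fin N → ℝ := fun j => ((cvec V j : ℚ) : ℝ) with hcr'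
  have hVc : Vq.mulVec (cvec V) = fun _ => 1 := by
    unfold cvec
    rw [← hVq', Matrix.mulVec_mulVec, Matrix.mul_nonsing_inv _ (isUnit_iff_ne_zero.mpr hdetq),
      Matrix.one_mulVec]
  have hVcr : Vr.mulVec cr = fun _ => 1 := by
    funext k
    have h := congrFun hVc k
    simp only [Matrix.mulVec, dotProduct, Matrix.map_apply, hVq'] at h
    simp only [Matrix.mulVec, dotProduct, Matrix.map_apply, hVr', hcr']
    exact_mod_cast congrArg (fun q : ℚ => (q : ℝ)) h
  set d : Fin N → ℝ := fun j => Real.log (a j) - Real.log (b j) with hd'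
  have hVd : Vr.mulVec d = fun _ => t := by
    funext k
    simp only [Matrix.mulVec, dotProduct, Matrix.map_apply, hVr']
    exact hlog k
  have hinv : IsUnit Vr.det := isUnit_iff_ne_zero.mpr hdetr
  have hrecover : ∀ v : Fin N → ℝ, Vr⁻¹.mulVec (Vr.mulVec v) = v := by
    intro v
    rw [Matrix.mulVec_mulVec, Matrix.nonsing_inv_mul _ hinv, Matrix.one_mulVec]
  have hdc : d = t • cr := by
    have h1 : d = Vr⁻¹.mulVec (fun _ => t) := by rw [← hVd, hrecover]
    have h2 : cr = Vr⁻¹.mulVec (fun _ => 1) := by rw [← hVcr, hrecover]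
    have h3 : (fun _ : Fin N => t) = t • (fun _ : Fin N => (1 : ℝ)) := by
      funext j; simp
    rw [h1, h3, Matrix.mulVec_smul, ← h2]
  have hab : ∀ j, a j = b j * Real.exp (t * cr j) := by
    intro j
    have h := congrFun hdc j
    simp only [hd', Pi.smul_apply, smul_eq_mul] at h
    have : Real.log (a j) = Real.log (b j) + t * cr j := by linarith
    calc a j = Real.exp (Real.log (a j)) := (Real.exp_log (ha j)).symm
    _ = Real.exp (Real.log (b j)) * Real.exp (t * cr j) := by rw [this, Real.exp_add]
    _ = b j * Real.exp (t * cr j) := by rw [Real.exp_log (hb j)]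
  -- sums of squares equal 1
  have hsa : ∑ j, a j ^ 2 = 1 := by
    have hnorm : r ^ 2 = ∑ j, ‖x j‖ ^ 2 := by
      rw [hr', EuclideanSpace.norm_eq, Real.sq_sqrt (by positivity)]
    simp only [ha', div_pow, ← Finset.sum_div, ← hnorm]
    field_simp
  have hsb : ∑ j, b j ^ 2 = 1 := by
    have hnorm : s ^ 2 = ∑ j, ‖y j‖ ^ 2 := by
      rw [hs', EuclideanSpace.norm_eq, Real.sq_sqrt (by positivity)]
    simp only [hb', div_pow, ← Finset.sum_div, ← hnorm]
    field_simp
  -- some coordinate of c is positive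
  have hcr0 : ∀ j, 0 ≤ cr j := fun j => by
    simp only [hcr']
    exact_mod_cast hc j
  have hex : ∃ j, 0 < cr j := by
    by_contra h
    push_neg at h
    have hall : ∀ j, cr j = 0 := fun j => le_antisymm (h j) (hcr0 j)
    have h1 := congrFun hVcr ⟨0, hN⟩
    simp only [Matrix.mulVec, dotProduct] at h1
    rw [Finset.sum_eq_zero (fun j _ => by rw [hall j, mul_zero])] at h1
    exact zero_ne_one h1
  obtain ⟨j0, hj0⟩ := hex
  -- t = 0
  have ht0 : t = 0 := by
    rcases lt_trichotomy t 0 with htn | h0 | htp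
    · -- t < 0 : a j ≤ b j with strict inequality at j0
      have h1 : ∀ j ∈ Finset.univ, a j ^ 2 ≤ b j ^ 2 := by
        intro j _
        have he : Real.exp (t * cr j) ≤ 1 :=
          Real.exp_le_one_iff.mpr (mul_nonpos_of_nonpos_of_nonneg htn.le (hcr0 j))
        rw [hab j, mul_pow]
        have he2 : Real.exp (t * cr j) ^ 2 ≤ 1 := by nlinarith [Real.exp_pos (t * cr j)]
        exact mul_le_of_le_one_right (sq_nonneg (b j)) he2
      have h2 : a j0 ^ 2 < b j0 ^ 2 := by
        have he : Real.exp (t * cr j0) < 1 :=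
          Real.exp_lt_one_iff.mpr (mul_neg_of_neg_of_pos htn hj0)
        rw [hab j0, mul_pow]
        have he2 : Real.exp (t * cr j0) ^ 2 < 1 := by nlinarith [Real.exp_pos (t * cr j0)]
        calc b j0 ^ 2 * Real.exp (t * cr j0) ^ 2 < b j0 ^ 2 * 1 :=
              mul_lt_mul_of_pos_left he2 (pow_pos (hb j0) 2)
        _ = b j0 ^ 2 := mul_one _
      have hlt := Finset.sum_lt_sum h1 ⟨j0, Finset.mem_univ j0, h2⟩
      rw [hsa, hsb] at hlt; exact absurd hlt (lt_irrefl 1)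
    · exact h0
    · have h1 : ∀ j ∈ Finset.univ, b j ^ 2 ≤ a j ^ 2 := by
        intro j _
        have he : 1 ≤ Real.exp (t * cr j) :=
          Real.one_le_exp_iff.mpr (mul_nonneg htp.le (hcr0 j))
        rw [hab j, mul_pow]
        have he2 : 1 ≤ Real.exp (t * cr j) ^ 2 := by nlinarith [Real.exp_pos (t * cr j)]
        exact le_mul_of_one_le_right (sq_nonneg (b j)) he2
      have h2 : b j0 ^ 2 < a j0 ^ 2 := by
        have he : 1 < Real.exp (t * cr j0) :=
          Real.one_lt_exp_iff.mpr (mul_pos htp hj0)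
        rw [hab j0, mul_pow]
        have he2 : 1 < Real.exp (t * cr j0) ^ 2 := by nlinarith [Real.exp_pos (t * cr j0)]
        exact lt_mul_of_one_lt_right (pow_pos (hb j0) 2) he2
      have hlt := Finset.sum_lt_sum h1 ⟨j0, Finset.mem_univ j0, h2⟩
      rw [hsa, hsb] at hlt; exact absurd hlt (lt_irrefl 1)
  have hrs : s = r := by
    have : Real.log s = Real.log r := by rw [ht'] at ht0; linarith
    calc s = Real.exp (Real.log s) := (Real.exp_log hs).symm
    _ = Real.exp (Real.log r) := by rw [this]
    _ = r := Real.exp_log hr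
  -- conclude
  have rne : ((r : ℝ) : ℂ) ≠ 0 := by exact_mod_cast hr.ne'
  have hmon : monV V (fun k => x k / ((r : ℝ) : ℂ)) = monV V (fun k => y k / ((r : ℝ) : ℂ)) := by
    funext k
    have h := congrFun hg k
    simp only [gmap, ← hr', ← hs', hrs] at h
    exact mul_left_cancel₀ rne h
  obtain ⟨g, hgeq⟩ := hsep _ _ (fun k => div_ne_zero (hx k) rne)
    (fun k => div_ne_zero (hy k) rne) hmon
  refine ⟨g, fun k => ?_⟩
  have h := congrFun hgeq k
  field_simp at h
  linear_combination h
end
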